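/- arXiv:1904.00366 — 7 statements merged into one kernel-verified Lean document; each statement's English description precedes it below -/
import Mathlib

section
/- Let X be a compact metric space and f : X → X a continuous map. Define the relation ~ on the chain recurrent set CR(f) by: x ~ y iff for every δ > 0 there exist positive integers m and N such that for every integer n ≥ N there exist two δ-chains (x_i)_{i=0}^{mn} and (y_i)_{i=0}^{mn} of f consisting of points of CR(f) with x_0 = y_{mn} = x and x_{mn} = y_0 = y. Then ~ is an equivalence relation on CR(f). -/
open Metric Filter Set
open scoped Classical

section Defs

variable {X : Type*} [MetricSpace X]

/-- `(c i)_{i=0}^k` is a δ-chain of `f`. -/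
def IsChain' (f : X → X) (δ : ℝ) (c : ℕ → X) (k : ℕ) : Prop :=
  ∀ i < k, dist (f (c i)) (c (i + 1)) ≤ δ

/-- The chain recurrent set of `f`. -/
def CR (f : X → X) : Set X :=
  {x | ∀ δ > 0, ∃ k > 0, ∃ c : ℕ → X, IsChain' f δ c k ∧ c 0 = x ∧ c k = x}

/-- The chain relation `~` on `CR f`. -/
def ChainRel (f : X → X) (x y : X) : Prop :=
  ∀ δ > 0, ∃ m > 0, ∃ N > 0, ∀ n ≥ N,
    (∃ c : ℕ → X, IsChain' f δ c (m * n) ∧ (∀ i ≤ m * n, c i ∈ CR f) ∧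
      c 0 = x ∧ c (m * n) = y) ∧
    (∃ c : ℕ → X, IsChain' f δ c (m * n) ∧ (∀ i ≤ m * n, c i ∈ CR f) ∧
      c 0 = y ∧ c (m * n) = x)

/-- Property* for a pair `(z, w)`, with cycles lying in `CR f`. -/
def PropertyStar (f : X → X) (z w : X) : Prop :=
  ∃ r > 0, ∀ δ > 0, ∃ k > 0, ∃ c c' : ℕ → X,
    IsChain' f δ c k ∧ IsChain' f δ c' k ∧
    (∀ i ≤ k, c i ∈ CR f) ∧ (∀ i ≤ k, c' i ∈ CR f) ∧
    c 0 = z ∧ c k = z ∧ c' 0 = w ∧ c' k = w ∧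
    ∀ i ≤ k, dist (c i) (c' i) > r

/-- Property* for a pair `(z, w)` (cycles not required to lie in `CR f`). -/
def PropertyStar' (f : X → X) (z w : X) : Prop :=
  ∃ r > 0, ∀ δ > 0, ∃ k > 0, ∃ c c' : ℕ → X,
    IsChain' f δ c k ∧ IsChain' f δ c' k ∧
    c 0 = z ∧ c k = z ∧ c' 0 = w ∧ c' k = w ∧
    ∀ i ≤ k, dist (c i) (c' i) > r

/-- Omega-limit set of the point `(x, y)` under `f × f`. -/
def OmegaLimit2 (f : X → X) (x y : X) : Set (X × X) :=
  {p | ∃ φ : ℕ → ℕ, StrictMono φ ∧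
    Tendsto (fun n => (f^[φ n] x, f^[φ n] y)) atTop (nhds p)}

/-- Omega-limit set of a point under `f`. -/
def OmegaLimit1 (f : X → X) (x : X) : Set X :=
  {p | ∃ φ : ℕ → ℕ, StrictMono φ ∧ Tendsto (fun n => f^[φ n] x) atTop (nhds p)}

/-- `(x, y)` is a DC1-pair for `f`. -/
def DC1Pair (f : X → X) (x y : X) : Prop :=
  (∀ δ > 0, Filter.limsup (fun n : ℕ =>
      (((Finset.range n).filter fun i => dist (f^[i] x) (f^[i] y) < δ).card : ℝ) / n)
      Filter.atTop = 1) ∧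
  (∃ δ₀ > 0, Filter.limsup (fun n : ℕ =>
      (((Finset.range n).filter fun i => dist (f^[i] x) (f^[i] y) > δ₀).card : ℝ) / n)
      Filter.atTop = 1)

/-- `f` exhibits distributional chaos of type 1. -/
def ExhibitsDC1 (f : X → X) : Prop :=
  ∃ S : Set X, ¬ S.Countable ∧ ∀ x ∈ S, ∀ y ∈ S, x ≠ y → DC1Pair f x y

/-- `(x, y)` is a Li-Yorke pair for `f`. -/
def LiYorkePair (f : X → X) (x y : X) : Prop :=
  Filter.liminf (fun n => dist (f^[n] x) (f^[n] y)) Filter.atTop = 0 ∧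
  Filter.limsup (fun n => dist (f^[n] x) (f^[n] y)) Filter.atTop > 0

/-- `(x, y)` is a proximal pair for `f`. -/
def ProximalPair (f : X → X) (x y : X) : Prop :=
  Filter.liminf (fun n => dist (f^[n] x) (f^[n] y)) Filter.atTop = 0

/-- `(x, y)` is a distal pair for `f`. -/
def DistalPair (f : X → X) (x y : X) : Prop :=
  0 < ⨅ n : ℕ, dist (f^[n] x) (f^[n] y)

/-- `f` has the limit shadowing property. -/
def LimitShadowing (f : X → X) : Prop :=
  ∀ x : ℕ → X, Tendsto (fun i => dist (f (x i)) (x (i + 1))) atTop (nhds 0) →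
    ∃ p : X, Tendsto (fun i => dist (f^[i] p) (x i)) atTop (nhds 0)

/-- The restriction of `f` to `CR f` has the shadowing property. -/
def ShadowingOnCR (f : X → X) : Prop :=
  ∀ ε > 0, ∃ δ > 0, ∀ x : ℕ → X, (∀ i, x i ∈ CR f) →
    (∀ i, dist (f (x i)) (x (i + 1)) ≤ δ) →
    ∃ p ∈ CR f, ∀ i, dist (f^[i] p) (x i) ≤ ε

/-- Topological entropy of `f` relative to the cover `U`. -/
noncomputable def entropyOfCover (f : X → X) {ι : Type*} (U : ι → Set X) : ℝ :=
  Filter.limsup (fun n : ℕ =>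
    Real.log ((sInf {m : ℕ | ∃ s : Finset (Fin n → ι), s.card = m ∧
      (⋃ g ∈ s, ⋂ i : Fin n, f^[(i : ℕ)] ⁻¹' U (g i)) = Set.univ} : ℕ) : ℝ) / n)
    Filter.atTop

/-- `(x, y)` is an entropy pair for `f`. -/
def EntropyPair (f : X → X) (x y : X) : Prop :=
  x ≠ y ∧ ∀ A B : Set X, IsClosed A → IsClosed B → x ∈ interior A → y ∈ interior B →
    Disjoint A B → 0 < entropyOfCover f (fun b : Bool => if b then Aᶜ else Bᶜ)

end Defs

section Aux

variable {X : Type*} [MetricSpace X]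

/-- The δ-chain recurrent set. -/
def CRd (f : X → X) (δ : ℝ) : Set X :=
  {x | ∃ k > 0, ∃ c : ℕ → X, IsChain' f δ c k ∧ c 0 = x ∧ c k = x}

lemma CRd_mono {f : X → X} {δ δ' : ℝ} (h : δ ≤ δ') : CRd f δ ⊆ CRd f δ' := by
  rintro x ⟨k, hk, c, hc, h0, hkx⟩
  exact ⟨k, hk, c, fun i hi => (hc i hi).trans h, h0, hkx⟩

lemma unif_cont [CompactSpace X] {f : X → X} (hf : Continuous f) {ε : ℝ} (hε : 0 < ε) :
    ∃ η > 0, ∀ a b : X, dist a b ≤ η → dist (f a) (f b) ≤ ε := by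
  have h := CompactSpace.uniformContinuous_of_continuous hf
  rw [Metric.uniformContinuous_iff] at h
  obtain ⟨δ, hδ, hd⟩ := h ε hε
  exact ⟨δ / 2, by linarith, fun a b hab =>
    le_of_lt (hd (lt_of_le_of_lt hab (by linarith)))⟩

lemma limit_mem_CR [CompactSpace X] {f : X → X} (hf : Continuous f) {a : X}
    (h : ∀ ε > 0, ∃ z, dist z a ≤ ε ∧ z ∈ CRd f ε) : a ∈ CR f := by
  intro δ hδ
  obtain ⟨η, hη, hu⟩ := unif_cont hf (show (0:ℝ) < δ / 3 by linarith)
  have hε0 : 0 < min η (δ / 3) := lt_min hη (by linarith)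
  set ε := min η (δ / 3) with hεdef
  obtain ⟨z, hza, k, hk, c, hc, h0, hkz⟩ := h ε hε0
  refine ⟨k, hk, fun i => if i = 0 ∨ i = k then a else c i, ?_, by simp, by simp⟩
  have hnear : ∀ j, dist ((fun i => if i = 0 ∨ i = k then a else c i) j) (c j) ≤ ε := by
    intro j
    by_cases hj : j = 0 ∨ j = k
    · simp only [if_pos hj]
      rcases hj with hj | hj <;> subst hj
      · rw [h0, dist_comm]; exact hza
      · rw [hkz, dist_comm]; exact hza
    · simp only [if_neg hj, dist_self]; exact hε0.le
  intro i hi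
  have h1 : dist (f ((fun i => if i = 0 ∨ i = k then a else c i) i)) (f (c i)) ≤ δ / 3 :=
    hu _ _ ((hnear i).trans (min_le_left _ _))
  have h2 : dist (f (c i)) (c (i + 1)) ≤ ε := hc i hi
  have h3 : dist (c (i + 1)) ((fun i => if i = 0 ∨ i = k then a else c i) (i + 1)) ≤ ε := by
    rw [dist_comm]; exact hnear (i + 1)
  have hεle : ε ≤ δ / 3 := min_le_right _ _
  calc dist (f ((fun i => if i = 0 ∨ i = k then a else c i) i))
        ((fun i => if i = 0 ∨ i = k then a else c i) (i + 1))
      ≤ dist (f ((fun i => if i = 0 ∨ i = k then a else c i) i)) (f (c i))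
        + dist (f (c i)) (c (i + 1))
        + dist (c (i + 1)) ((fun i => if i = 0 ∨ i = k then a else c i) (i + 1)) :=
        dist_triangle4 _ _ _ _
    _ ≤ δ := by linarith

lemma near_CR [CompactSpace X] {f : X → X} (hf : Continuous f) {η : ℝ} (hη : 0 < η) :
    ∃ δ0 > 0, ∀ z ∈ CRd f δ0, ∃ w ∈ CR f, dist z w ≤ η := by
  by_contra hcon
  push_neg at hcon
  have hz : ∀ n : ℕ, ∃ z, z ∈ CRd f (1 / (n + 1)) ∧ ∀ w ∈ CR f, η < dist z w := by
    intro n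
    obtain ⟨z, hz1, hz2⟩ := hcon (1 / (n + 1)) (by positivity)
    exact ⟨z, hz1, hz2⟩
  choose z hz1 hz2 using hz
  obtain ⟨a, -, φ, hφ, hconv⟩ := isCompact_univ.tendsto_subseq (fun n => Set.mem_univ (z n))
  rw [Metric.tendsto_atTop] at hconv
  have ha : a ∈ CR f := by
    apply limit_mem_CR hf
    intro ε hε
    obtain ⟨n0, hn0⟩ := exists_nat_one_div_lt hε
    obtain ⟨N, hN⟩ := hconv ε hε
    refine ⟨z (φ (max N n0)), le_of_lt (hN _ (le_max_left _ _)), ?_⟩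
    refine CRd_mono ?_ (hz1 (φ (max N n0)))
    have h1 : (n0 : ℝ) + 1 ≤ (φ (max N n0) : ℝ) + 1 := by
      have h2 := hφ.le_apply (x := max N n0)
      have h3 := le_max_right N n0
      have : (n0 : ℕ) ≤ φ (max N n0) := le_trans h3 h2
      exact_mod_cast by exact_mod_cast Nat.add_le_add_right this 1
    calc (1 : ℝ) / ((φ (max N n0) : ℝ) + 1) ≤ 1 / ((n0 : ℝ) + 1) := by
          apply one_div_le_one_div_of_le (by positivity) h1
      _ ≤ ε := le_of_lt hn0
  obtain ⟨N, hN⟩ := hconv η hη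
  exact absurd (hN N le_rfl) (not_lt.mpr (hz2 (φ N) a ha).le)

lemma loop_pts_mem_CRd {f : X → X} {δ : ℝ} {c : ℕ → X} {k : ℕ}
    (hc : IsChain' f δ c k) (hk : 0 < k) (hloop : c k = c 0) :
    ∀ i ≤ k, c i ∈ CRd f δ := by
  intro i hik
  refine ⟨k, hk, fun j => if i + j ≤ k then c (i + j) else c (i + j - k), ?_, ?_, ?_⟩
  · intro j hj
    show dist (f (if i + j ≤ k then c (i + j) else c (i + j - k)))
      (if i + (j + 1) ≤ k then c (i + (j + 1)) else c (i + (j + 1) - k)) ≤ δ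
    by_cases h1 : i + (j + 1) ≤ k
    · rw [if_pos (by omega), if_pos h1]
      exact hc (i + j) (by omega)
    · by_cases h2 : i + j ≤ k
      · have e1 : i + j = k := by omega
        have e2 : i + (j + 1) - k = 1 := by omega
        rw [if_pos h2, if_neg h1, e1, e2, hloop]
        exact hc 0 hk
      · have e2 : i + (j + 1) - k = (i + j - k) + 1 := by omega
        rw [if_neg h2, if_neg h1, e2]
        exact hc (i + j - k) (by omega)
  · simp [hik]
  · show (if i + k ≤ k then c (i + k) else c (i + k - k)) = c i
    by_cases h : i + k ≤ k
    · have hi0 : i = 0 := by omega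
      rw [if_pos h, hi0, zero_add, hloop]
    · rw [if_neg h]
      congr 1
      omega

lemma concat_chains {f : X → X} {δ : ℝ} {c d : ℕ → X} {k1 k2 : ℕ} (hk1 : 0 < k1)
    (h1 : IsChain' f δ c k1) (h2 : IsChain' f δ d k2)
    (m1 : ∀ i ≤ k1, c i ∈ CR f) (m2 : ∀ i ≤ k2, d i ∈ CR f)
    (hcd : c k1 = d 0) :
    ∃ e : ℕ → X, IsChain' f δ e (k1 + k2) ∧ (∀ i ≤ k1 + k2, e i ∈ CR f) ∧
      e 0 = c 0 ∧ e (k1 + k2) = d k2 := by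
  refine ⟨fun i => if i < k1 then c i else d (i - k1), ?_, ?_, ?_, ?_⟩
  · intro i hi
    show dist (f (if i < k1 then c i else d (i - k1)))
      (if i + 1 < k1 then c (i + 1) else d (i + 1 - k1)) ≤ δ
    by_cases h : i + 1 ≤ k1
    · have hsucc : (if i + 1 < k1 then c (i + 1) else d (i + 1 - k1)) = c (i + 1) := by
        by_cases h' : i + 1 < k1
        · rw [if_pos h']
        · have : i + 1 = k1 := by omega
          rw [if_neg h', this, Nat.sub_self, ← hcd]
      rw [if_pos (by omega), hsucc]
      exact h1 i (by omega)
    · have e2 : i + 1 - k1 = (i - k1) + 1 := by omega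
      rw [if_neg (by omega), if_neg (by omega), e2]
      exact h2 (i - k1) (by omega)
  · intro i hi
    show (if i < k1 then c i else d (i - k1)) ∈ CR f
    by_cases h : i < k1
    · rw [if_pos h]; exact m1 i h.le
    · rw [if_neg h]; exact m2 (i - k1) (by omega)
  · show (if 0 < k1 then c 0 else d (0 - k1)) = c 0
    rw [if_pos hk1]
  · show (if k1 + k2 < k1 then c (k1 + k2) else d (k1 + k2 - k1)) = d k2
    rw [if_neg (by omega)]
    congr 1
    omega

lemma loop_in_CR [CompactSpace X] {f : X → X} (hf : Continuous f) {x : X} (hx : x ∈ CR f)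
    {δ : ℝ} (hδ : 0 < δ) :
    ∃ k > 0, ∃ c : ℕ → X, IsChain' f δ c k ∧ (∀ i ≤ k, c i ∈ CR f) ∧ c 0 = x ∧ c k = x := by
  obtain ⟨η0, hη0, hu⟩ := unif_cont hf (show (0:ℝ) < δ / 3 by linarith)
  have hη : 0 < min η0 (δ / 3) := lt_min hη0 (by linarith)
  set η := min η0 (δ / 3) with hηdef
  obtain ⟨δ0, hδ0, hnear0⟩ := near_CR hf hη
  have hδ' : 0 < min δ0 η := lt_min hδ0 hη
  obtain ⟨k, hk, c, hc, h0, hkx⟩ := hx (min δ0 η) hδ'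
  have hmem : ∀ i ≤ k, ∃ w ∈ CR f, dist (c i) w ≤ η := fun i hi =>
    hnear0 _ (CRd_mono (min_le_left _ _) (loop_pts_mem_CRd hc hk (hkx.trans h0.symm) i hi))
  have hw : ∀ i, ∃ w, w ∈ CR f ∧ (i ≤ k → dist (c i) w ≤ η) := by
    intro i
    by_cases h : i ≤ k
    · obtain ⟨w, hw1, hw2⟩ := hmem i h
      exact ⟨w, hw1, fun _ => hw2⟩
    · exact ⟨x, hx, fun h' => absurd h' h⟩
  choose w hw1 hw2 using hw
  have hnear : ∀ j ≤ k, dist ((fun i => if i = 0 ∨ i = k then x else w i) j) (c j) ≤ η := by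
    intro j hjk
    by_cases hj : j = 0 ∨ j = k
    · simp only [if_pos hj]
      rcases hj with hj | hj <;> subst hj
      · rw [h0]; simp [hη.le]
      · rw [hkx]; simp [hη.le]
    · simp only [if_neg hj]
      rw [dist_comm]
      exact hw2 j hjk
  refine ⟨k, hk, fun i => if i = 0 ∨ i = k then x else w i, ?_, ?_, by simp, by simp⟩
  · intro i hi
    have h1 : dist (f ((fun i => if i = 0 ∨ i = k then x else w i) i)) (f (c i)) ≤ δ / 3 :=
      hu _ _ ((hnear i hi.le).trans (min_le_left _ _))
    have h2 : dist (f (c i)) (c (i + 1)) ≤ min δ0 η := hc i hi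
    have h3 : dist (c (i + 1)) ((fun i => if i = 0 ∨ i = k then x else w i) (i + 1)) ≤ η := by
      rw [dist_comm]; exact hnear (i + 1) hi
    have hb1 : min δ0 η ≤ δ / 3 := le_trans (min_le_right _ _) (min_le_right _ _)
    have hb2 : η ≤ δ / 3 := min_le_right _ _
    calc dist (f ((fun i => if i = 0 ∨ i = k then x else w i) i))
          ((fun i => if i = 0 ∨ i = k then x else w i) (i + 1))
        ≤ dist (f ((fun i => if i = 0 ∨ i = k then x else w i) i)) (f (c i))
          + dist (f (c i)) (c (i + 1))
          + dist (c (i + 1)) ((fun i => if i = 0 ∨ i = k then x else w i) (i + 1)) :=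
          dist_triangle4 _ _ _ _
      _ ≤ δ := by linarith
  · intro i hi
    show (if i = 0 ∨ i = k then x else w i) ∈ CR f
    by_cases h : i = 0 ∨ i = k
    · rw [if_pos h]; exact hx
    · rw [if_neg h]; exact hw1 i

lemma repeat_loop {f : X → X} {δ : ℝ} {x : X} {c : ℕ → X} {k : ℕ} (hk : 0 < k)
    (hc : IsChain' f δ c k) (hm : ∀ i ≤ k, c i ∈ CR f) (h0 : c 0 = x) (hkx : c k = x) :
    ∀ n : ℕ, 0 < n → ∃ e : ℕ → X, IsChain' f δ e (k * n) ∧ (∀ i ≤ k * n, e i ∈ CR f) ∧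
      e 0 = x ∧ e (k * n) = x := by
  intro n hn
  induction n with
  | zero => omega
  | succ n ih =>
    by_cases hn0 : n = 0
    · subst hn0
      exact ⟨c, by simpa using hc, by simpa using hm, h0, by simpa using hkx⟩
    · obtain ⟨e, he, hem, he0, hek⟩ := ih (by omega)
      obtain ⟨e', he', hem', he0', hek'⟩ :=
        concat_chains (Nat.mul_pos hk (by omega)) he hc hem hm (by rw [hek, h0])
      have hkk : k * n + k = k * (n + 1) := by ring
      exact ⟨e', by rwa [hkk] at he', by rwa [hkk] at hem', he0'.trans he0,
        by rw [← hkk]; exact hek'.trans hkx⟩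

end Aux

/-- the chain relation is an equivalence relation on `CR f`. -/
theorem chainRel_is_equivalence {X : Type*} [MetricSpace X] [CompactSpace X]
    (f : X → X) (hf : Continuous f) :
    (∀ x ∈ CR f, ChainRel f x x) ∧
    (∀ x ∈ CR f, ∀ y ∈ CR f, ChainRel f x y → ChainRel f y x) ∧
    (∀ x ∈ CR f, ∀ y ∈ CR f, ∀ z ∈ CR f,
      ChainRel f x y → ChainRel f y z → ChainRel f x z) := by
  refine ⟨?_, ?_, ?_⟩
  · -- reflexivity
    intro x hx δ hδ
    obtain ⟨k, hk, c, hc, hm, h0, hkx⟩ := loop_in_CR hf hx hδ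
    refine ⟨k, hk, 1, one_pos, fun n hn => ?_⟩
    obtain ⟨e, he, hem, he0, hek⟩ := repeat_loop hk hc hm h0 hkx n hn
    exact ⟨⟨e, he, hem, he0, hek⟩, ⟨e, he, hem, he0, hek⟩⟩
  · -- symmetry
    intro x _ y _ h δ hδ
    obtain ⟨m, hm, N, hN, hp⟩ := h δ hδ
    exact ⟨m, hm, N, hN, fun n hn => ⟨(hp n hn).2, (hp n hn).1⟩⟩
  · -- transitivity
    intro x _ y _ z _ hxy hyz δ hδ
    obtain ⟨m1, hm1, N1, hN1, hp1⟩ := hxy δ hδ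
    obtain ⟨m2, hm2, N2, hN2, hp2⟩ := hyz δ hδ
    refine ⟨2 * m1 * m2, by positivity, max N1 N2,
      lt_of_lt_of_le hN1 (le_max_left _ _), fun n hn => ?_⟩
    have hn0 : 0 < n := lt_of_lt_of_le hN1 (le_trans (le_max_left _ _) hn)
    have hle2 : n ≤ m2 * n := Nat.le_mul_of_pos_left n hm2
    have hle1 : n ≤ m1 * n := Nat.le_mul_of_pos_left n hm1
    have hn1 : m2 * n ≥ N1 := by
      have := le_max_left N1 N2; omega
    have hn2 : m1 * n ≥ N2 := by
      have := le_max_right N1 N2; omega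
    obtain ⟨⟨c1, hc1, hmm1, h10, h1k⟩, ⟨c1', hc1', hmm1', h10', h1k'⟩⟩ := hp1 (m2 * n) hn1
    obtain ⟨⟨c2, hc2, hmm2, h20, h2k⟩, ⟨c2', hc2', hmm2', h20', h2k'⟩⟩ := hp2 (m1 * n) hn2
    have hpos1 : 0 < m1 * (m2 * n) := Nat.mul_pos hm1 (Nat.mul_pos hm2 hn0)
    have hpos2 : 0 < m2 * (m1 * n) := Nat.mul_pos hm2 (Nat.mul_pos hm1 hn0)
    constructor
    · obtain ⟨e, he, hem, he0, hek⟩ :=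
        concat_chains hpos1 hc1 hc2 hmm1 hmm2 (h1k.trans h20.symm)
      have hlen : m1 * (m2 * n) + m2 * (m1 * n) = 2 * m1 * m2 * n := by ring
      exact ⟨e, by rwa [hlen] at he, by rwa [hlen] at hem, he0.trans h10,
        by rw [← hlen]; exact hek.trans h2k⟩
    · obtain ⟨e, he, hem, he0, hek⟩ :=
        concat_chains hpos2 hc2' hc1' hmm2' hmm1' (h2k'.trans h10'.symm)
      have hlen : m2 * (m1 * n) + m1 * (m2 * n) = 2 * m1 * m2 * n := by ring
      exact ⟨e, by rwa [hlen] at he, by rwa [hlen] at hem, he0.trans h20',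
        by rw [← hlen]; exact hek.trans h1k'⟩
end

section
/- Let X be a compact metric space and f : X → X continuous. Then the chain recurrent set of the restriction f|_{CR(f)} : CR(f) → CR(f) equals CR(f); that is, every chain recurrent point of f is chain recurrent for the restricted map, where chains are required to lie inside CR(f). -/
open Metric Filter Set
open scoped Classical

section Aux

variable {X : Type*} [MetricSpace X]

/-- Points lying on some `η`-cycle of `f` through `x`. -/
def cyclePts (f : X → X) (x : X) (η : ℝ) : Set X :=
  {y | ∃ k > 0, ∃ c : ℕ → X, IsChain' f η c k ∧ c 0 = x ∧ c k = x ∧ ∃ i ≤ k, c i = y}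

/-- The set of limit points of points on arbitrarily fine cycles through `x`. -/
def Aset (f : X → X) (x : X) : Set X :=
  ⋂ n : ℕ, closure (cyclePts f x (1 / (n + 1)))

lemma cyclePts_mono (f : X → X) (x : X) {η η' : ℝ} (h : η ≤ η') :
    cyclePts f x η ⊆ cyclePts f x η' := by
  rintro y ⟨k, hk, c, hc, hc0, hck, i, hik, hci⟩
  exact ⟨k, hk, c, fun j hj => (hc j hj).trans h, hc0, hck, i, hik, hci⟩

lemma one_div_succ_antitone (n : ℕ) : (1 : ℝ) / (↑(n + 1) + 1) ≤ 1 / (↑n + 1) := by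
  apply one_div_le_one_div_of_le
  · positivity
  · push_cast; linarith

/-- Every point of `Aset f x` is chain recurrent (rotation argument). -/
lemma Aset_subset_CR [CompactSpace X] (f : X → X) (hf : Continuous f) (x : X) :
    Aset f x ⊆ CR f := by
  intro y hy ε hε
  obtain ⟨γ, hγ0, hγ⟩ := Metric.uniformContinuous_iff.mp
    (CompactSpace.uniformContinuous_of_continuous hf) (ε / 3) (by positivity)
  obtain ⟨n, hn⟩ := exists_nat_one_div_lt (show (0 : ℝ) < ε / 3 by positivity)
  have hy' : y ∈ closure (cyclePts f x (1 / (n + 1))) := by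
    simp only [Aset, Set.mem_iInter] at hy; exact hy n
  obtain ⟨z, hz, hdz⟩ := Metric.mem_closure_iff.mp hy' (min γ (ε / 3)) (by positivity)
  obtain ⟨k, hk, c, hc, hc0, hck, i, hik, hci⟩ := hz
  subst hci
  set η : ℝ := 1 / ((n : ℝ) + 1) with hηdef
  have hηε : η ≤ ε / 3 := le_of_lt hn
  have hmod : c (i % k) = c i := by
    rcases Nat.lt_or_ge i k with h | h
    · rw [Nat.mod_eq_of_lt h]
    · have hik' : i = k := le_antisymm hik h
      rw [hik', Nat.mod_self, hc0, hck]
  have hstep : ∀ r < k, dist (f (c r)) (c ((r + 1) % k)) ≤ η := by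
    intro r hr
    rcases Nat.lt_or_ge (r + 1) k with h | h
    · rw [Nat.mod_eq_of_lt h]; exact hc r hr
    · have h1 : r + 1 = k := le_antisymm hr h
      have h2 := hc r hr
      rw [h1] at h2
      rw [h1, Nat.mod_self, hc0, ← hck]
      exact h2
  have hstep' : ∀ j : ℕ, dist (f (c (j % k))) (c ((j + 1) % k)) ≤ η := by
    intro j
    have h1 : (j % k + 1) % k = (j + 1) % k := (Nat.mod_modEq j k).add_right 1
    have := hstep (j % k) (Nat.mod_lt _ hk)
    rwa [h1] at this
  refine ⟨k, hk, fun j => if j = 0 ∨ k ≤ j then y else c ((i + j) % k), ?_, by simp, by simp⟩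
  intro j hj
  have hjk : ¬ k ≤ j := not_le.mpr hj
  have e1 : dist (f (if j = 0 ∨ k ≤ j then y else c ((i + j) % k))) (f (c ((i + j) % k)))
      ≤ ε / 3 := by
    rcases eq_or_ne j 0 with h | h
    · subst h
      simp only [true_or, if_pos]
      have h2 : (i + 0) % k = i % k := by simp
      rw [h2, hmod]
      exact le_of_lt (hγ (lt_of_lt_of_le hdz (min_le_left _ _)))
    · rw [if_neg (by simp [h, hjk])]
      simp [hε.le]
      positivity
  have e3 : dist (c ((i + j + 1) % k)) (if j + 1 = 0 ∨ k ≤ j + 1 then y else c ((i + (j + 1)) % k))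
      ≤ ε / 3 := by
    rcases Nat.lt_or_ge (j + 1) k with h | h
    · rw [if_neg (by simp [not_le.mpr h])]
      have : i + j + 1 = i + (j + 1) := by ring
      rw [this]
      simp
      positivity
    · have h1 : j + 1 = k := le_antisymm hj h
      rw [if_pos (Or.inr h)]
      have h2 : (i + j + 1) % k = i % k := by
        rw [show i + j + 1 = i + k by omega, Nat.add_mod_right]
      rw [h2, hmod, dist_comm]
      exact le_of_lt (lt_of_lt_of_le hdz (min_le_right _ _))
  calc dist (f (if j = 0 ∨ k ≤ j then y else c ((i + j) % k)))
        (if j + 1 = 0 ∨ k ≤ j + 1 then y else c ((i + (j + 1)) % k))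
      ≤ dist (f (if j = 0 ∨ k ≤ j then y else c ((i + j) % k))) (f (c ((i + j) % k)))
        + dist (f (c ((i + j) % k))) (c ((i + j + 1) % k))
        + dist (c ((i + j + 1) % k))
          (if j + 1 = 0 ∨ k ≤ j + 1 then y else c ((i + (j + 1)) % k)) := dist_triangle4 _ _ _ _
    _ ≤ ε / 3 + ε / 3 + ε / 3 := by
        gcongr
        exact (hstep' (i + j)).trans hηε
    _ = ε := by ring

/-- For every `ε' > 0`, all points on fine enough cycles through `x` are `ε'`-close
to `Aset f x`. -/
lemma exists_near [CompactSpace X] (f : X → X) (x : X) {ε' : ℝ} (hε' : 0 < ε') :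
    ∃ n : ℕ, ∀ y ∈ closure (cyclePts f x (1 / (n + 1))),
      ∃ a ∈ Aset f x, dist y a < ε' := by
  by_contra h
  push_neg at h
  set K : ℕ → Set X := fun n =>
    closure (cyclePts f x (1 / (n + 1))) ∩ {y | ∀ a ∈ Aset f x, ε' ≤ dist y a} with hK
  have hKcl : ∀ n, IsClosed (K n) := by
    intro n
    have hset : {y | ∀ a ∈ Aset f x, ε' ≤ dist y a}
        = ⋂ a ∈ Aset f x, {y | ε' ≤ dist y a} := by ext; simp
    refine isClosed_closure.inter ?_
    rw [hset]
    exact isClosed_biInter fun a _ =>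
      isClosed_le continuous_const (continuous_id.dist continuous_const)
  have hKmono : ∀ n, K (n + 1) ⊆ K n := by
    intro n
    apply Set.inter_subset_inter_left
    exact closure_mono (cyclePts_mono f x (one_div_succ_antitone n))
  have hKne : ∀ n, (K n).Nonempty := by
    intro n
    obtain ⟨y, hy1, hy2⟩ := h n
    exact ⟨y, hy1, fun a ha => (hy2 a ha)⟩
  obtain ⟨y, hy⟩ := IsCompact.nonempty_iInter_of_sequence_nonempty_isCompact_isClosed
    K hKmono hKne ((hKcl 0).isCompact) hKcl
  simp only [Set.mem_iInter] at hy
  have hyA : y ∈ Aset f x := Set.mem_iInter.mpr fun n => (hy n).1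
  have := (hy 0).2 y hyA
  simp at this
  linarith

end Aux

/-- `CR (f|_{CR f}) = CR f`. -/
theorem CR_restriction_eq_CR {X : Type*} [MetricSpace X] [CompactSpace X]
    (f : X → X) (hf : Continuous f) :
    {x : X | x ∈ CR f ∧ ∀ δ > 0, ∃ k > 0, ∃ c : ℕ → X,
      IsChain' f δ c k ∧ (∀ i ≤ k, c i ∈ CR f) ∧ c 0 = x ∧ c k = x} = CR f := by
  ext x
  simp only [Set.mem_setOf_eq]
  constructor
  · rintro ⟨h, _⟩; exact h
  · intro hx
    refine ⟨hx, fun δ hδ => ?_⟩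
    obtain ⟨γ, hγ0, hγ⟩ := Metric.uniformContinuous_iff.mp
      (CompactSpace.uniformContinuous_of_continuous hf) (δ / 4) (by positivity)
    have hε'0 : (0 : ℝ) < min γ (δ / 4) := by positivity
    obtain ⟨n, hn⟩ := exists_near f x hε'0
    have hη0 : (0 : ℝ) < min (1 / ((n : ℝ) + 1)) (δ / 2) := by positivity
    obtain ⟨k, hk, c, hc, hc0, hck⟩ := hx _ hη0
    have hmem : ∀ i ≤ k, c i ∈ cyclePts f x (1 / (n + 1)) := fun i hi =>
      ⟨k, hk, c, fun j hj => (hc j hj).trans (min_le_left _ _), hc0, hck, i, hi, rfl⟩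
    have hnear : ∀ i : ℕ, ∃ a, i ≤ k → a ∈ Aset f x ∧ dist (c i) a < min γ (δ / 4) := by
      intro i
      by_cases hi : i ≤ k
      · obtain ⟨a, ha, hd⟩ := hn _ (subset_closure (hmem i hi))
        exact ⟨a, fun _ => ⟨ha, hd⟩⟩
      · exact ⟨x, fun h => absurd h hi⟩
    choose a ha using hnear
    set b : ℕ → X := fun i => if i = 0 ∨ i = k then x else a i with hb
    have hbd : ∀ i ≤ k, dist (c i) (b i) < min γ (δ / 4) := by
      intro i hi
      rcases eq_or_ne i 0 with h | h0
      · subst h; simp [hb, hc0, hε'0]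
      rcases eq_or_ne i k with h | hk'
      · subst h; simp [hb, hck, hε'0]
      · rw [hb]; simp only [h0, hk', or_self, if_false]
        exact (ha i hi).2
    refine ⟨k, hk, b, ?_, ?_, by simp [hb], by simp [hb]⟩
    · intro i hi
      have h1 : dist (f (b i)) (f (c i)) < δ / 4 := by
        apply hγ
        rw [dist_comm]
        exact lt_of_lt_of_le (hbd i hi.le) (min_le_left _ _)
      have h2 : dist (f (c i)) (c (i + 1)) ≤ δ / 2 :=
        (hc i hi).trans (min_le_right _ _)
      have h3 : dist (c (i + 1)) (b (i + 1)) < δ / 4 :=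
        lt_of_lt_of_le (hbd (i + 1) hi) (min_le_right _ _)
      calc dist (f (b i)) (b (i + 1))
          ≤ dist (f (b i)) (f (c i)) + dist (f (c i)) (c (i + 1))
            + dist (c (i + 1)) (b (i + 1)) := dist_triangle4 _ _ _ _
        _ ≤ δ / 4 + δ / 2 + δ / 4 := by linarith
        _ = δ := by ring
    · intro i hi
      rcases eq_or_ne i 0 with h | h0
      · subst h; simpa [hb] using hx
      rcases eq_or_ne i k with h | hk'
      · subst h; simpa [hb] using hx
      · rw [hb]; simp only [h0, hk', or_self, if_false]
        exact Aset_subset_CR f hf x (ha i hi).1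
end

section
/- Let X be a compact metric space and f : X → X continuous. If a pair (x, y) ∈ CR(f)² has property* (there exists r > 0 such that for every δ > 0 there are two δ-cycles (x_i)_{i=0}^k and (y_i)_{i=0}^k of f in CR(f) of the same length with x_0 = x_k = x, y_0 = y_k = y, and d(x_i, y_i) > r for all 0 ≤ i ≤ k), then (x, y) is a distal pair for f, i.e., inf_{n ≥ 0} d(fⁿ(x), fⁿ(y)) > 0. -/
open Metric Filter Set
open scoped Classical

/-- Tracking lemma: δ-chains of bounded length stay close to true orbits when δ is small. -/
private lemma track_chain {X : Type*} [MetricSpace X] [CompactSpace X]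
    (f : X → X) (hf : Continuous f) :
    ∀ n : ℕ, ∀ ε > 0, ∃ δ > 0, ∀ (x : X) (c : ℕ → X),
      (∀ i < n, dist (f (c i)) (c (i + 1)) ≤ δ) → c 0 = x →
      dist (c n) (f^[n] x) ≤ ε := by
  intro n
  induction n with
  | zero =>
    intro ε hε
    exact ⟨1, one_pos, fun x c _ h0 => by simp [h0, hε.le]⟩
  | succ n ih =>
    intro ε hε
    have huc := CompactSpace.uniformContinuous_of_continuous hf
    rw [Metric.uniformContinuous_iff] at huc
    obtain ⟨η, hη, hηf⟩ := huc (ε / 2) (by positivity)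
    obtain ⟨δ', hδ', hδ'f⟩ := ih (η / 2) (by positivity)
    refine ⟨min δ' (ε / 2), by positivity, fun x c hc h0 => ?_⟩
    have h1 : dist (c n) (f^[n] x) ≤ η / 2 :=
      hδ'f x c (fun i hi => (hc i (Nat.lt_succ_of_lt hi)).trans (min_le_left _ _)) h0
    have h2 : dist (f (c n)) (f (f^[n] x)) < ε / 2 :=
      hηf (lt_of_le_of_lt h1 (by linarith))
    have h3 := hc n (Nat.lt_succ_self n)
    rw [dist_comm] at h3
    calc dist (c (n + 1)) (f^[n + 1] x)
        ≤ dist (c (n + 1)) (f (c n)) + dist (f (c n)) (f^[n + 1] x) := dist_triangle _ _ _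
      _ ≤ ε / 2 + ε / 2 := by
          rw [Function.iterate_succ_apply']
          exact add_le_add (h3.trans (min_le_right _ _)) h2.le
      _ = ε := by ring

/-- property* implies distality. -/
theorem propertyStar_implies_distal {X : Type*} [MetricSpace X] [CompactSpace X]
    (f : X → X) (hf : Continuous f) (x y : X)
    (hx : x ∈ CR f) (hy : y ∈ CR f) (h : PropertyStar f x y) :
    DistalPair f x y := by
  obtain ⟨r, hr, hprop⟩ := h
  have key : ∀ n : ℕ, r / 2 ≤ dist (f^[n] x) (f^[n] y) := by
    intro n
    obtain ⟨δ, hδ, hδtrack⟩ := track_chain f hf n (r / 4) (by positivity)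
    obtain ⟨k, hk, c, c', hc, hc', _, _, h0, hck, h0', hck', hsep⟩ := hprop δ hδ
    set C : ℕ → X := fun i => c (i % k) with hC
    set C' : ℕ → X := fun i => c' (i % k) with hC'
    have mod_step : ∀ (d : ℕ → X), (∀ i < k, dist (f (d i)) (d (i + 1)) ≤ δ) →
        d 0 = d k → ∀ i, dist (f (d (i % k))) (d ((i + 1) % k)) ≤ δ := by
      intro d hd hdk i
      have hjk : i % k < k := Nat.mod_lt _ hk
      have hmod : (i % k + 1) % k = (i + 1) % k := Nat.mod_add_mod i k 1
      rcases eq_or_lt_of_le (Nat.succ_le_of_lt hjk) with he | hl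
      · rw [Nat.succ_eq_add_one] at he
        have e1 : (i + 1) % k = 0 := by rw [← hmod, he, Nat.mod_self]
        have h := hd (i % k) hjk
        rw [he] at h
        rw [e1, hdk]
        exact h
      · have e1 : (i + 1) % k = i % k + 1 := by rw [← hmod, Nat.mod_eq_of_lt hl]
        rw [e1]
        exact hd (i % k) hjk
    have hCchain : ∀ i < n, dist (f (C i)) (C (i + 1)) ≤ δ :=
      fun i _ => mod_step c hc (h0.trans hck.symm) i
    have hC'chain : ∀ i < n, dist (f (C' i)) (C' (i + 1)) ≤ δ :=
      fun i _ => mod_step c' hc' (h0'.trans hck'.symm) i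
    have hC0 : C 0 = x := by simpa [hC, Nat.zero_mod] using h0
    have hC'0 : C' 0 = y := by simpa [hC', Nat.zero_mod] using h0'
    have hx4 : dist (C n) (f^[n] x) ≤ r / 4 := hδtrack x C hCchain hC0
    have hy4 : dist (C' n) (f^[n] y) ≤ r / 4 := hδtrack y C' hC'chain hC'0
    have hsepn : r < dist (C n) (C' n) := hsep (n % k) (Nat.mod_lt _ hk).le
    have htri := dist_triangle4 (C n) (f^[n] x) (f^[n] y) (C' n)
    rw [dist_comm (f^[n] y) (C' n)] at htri
    linarith
  have h0 : (0 : ℝ) < r / 2 := by positivity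
  exact lt_of_lt_of_le h0 (le_ciInf key)
end

section
/- Let X be a compact metric space and f : X → X continuous. If (x, y) ∈ X² is a distal pair for f (inf_{n≥0} d(fⁿ(x), fⁿ(y)) > 0), then every (z, w) in the omega-limit set of (x, y) under f × f satisfies property*: there exists r > 0 such that for every δ > 0 there are equal-length δ-cycles of f through z and through w whose corresponding points stay at distance greater than r from each other. -/
open Metric Filter Set
open scoped Classical

/-- omega-limit points of a distal pair have property*. -/
theorem omegaLimit_of_distal_propertyStar {X : Type*} [MetricSpace X] [CompactSpace X]
    (f : X → X) (hf : Continuous f) (x y : X) (h : DistalPair f x y) :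
    ∀ p ∈ OmegaLimit2 f x y, PropertyStar' f p.1 p.2 := by
  intro p hp
  obtain ⟨φ, hφ, hlim⟩ := hp
  set r0 := ⨅ n : ℕ, dist (f^[n] x) (f^[n] y) with hr0def
  have hr0 : 0 < r0 := h
  have hbdd : BddBelow (Set.range fun n : ℕ => dist (f^[n] x) (f^[n] y)) :=
    ⟨0, by rintro _ ⟨n, rfl⟩; exact dist_nonneg⟩
  have hr0le : ∀ n : ℕ, r0 ≤ dist (f^[n] x) (f^[n] y) := fun n => ciInf_le hbdd n
  have hlx : Tendsto (fun n => f^[φ n] x) atTop (nhds p.1) :=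
    ((continuous_fst.tendsto p).comp hlim)
  have hly : Tendsto (fun n => f^[φ n] y) atTop (nhds p.2) :=
    ((continuous_snd.tendsto p).comp hlim)
  have hdistpw : r0 ≤ dist p.1 p.2 := by
    have ht : Tendsto (fun n => dist (f^[φ n] x) (f^[φ n] y)) atTop (nhds (dist p.1 p.2)) :=
      hlx.dist hly
    exact le_of_tendsto_of_tendsto' tendsto_const_nhds ht (fun n => hr0le (φ n))
  refine ⟨r0 / 2, by positivity, ?_⟩
  intro δ hδ
  have huc := CompactSpace.uniformContinuous_of_continuous hf
  obtain ⟨ε, hε, hεf⟩ := Metric.uniformContinuous_iff.mp huc (δ / 2) (by positivity)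
  set η := min ε (δ / 2) with hηdef
  have hη : 0 < η := lt_min hε (by positivity)
  obtain ⟨N, hN⟩ := Metric.tendsto_atTop.mp hlx η hη
  obtain ⟨M, hM⟩ := Metric.tendsto_atTop.mp hly η hη
  set n0 := max N M with hn0def
  have hNx : ∀ m ≥ n0, dist (f^[φ m] x) p.1 < η := fun m hm => hN m (le_trans (le_max_left _ _) hm)
  have hNy : ∀ m ≥ n0, dist (f^[φ m] y) p.2 < η := fun m hm => hM m (le_trans (le_max_right _ _) hm)
  set k := φ (n0 + 1) - φ n0 with hkdef
  have hklt : φ n0 < φ (n0 + 1) := hφ (Nat.lt_succ_self n0)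
  have hk : 0 < k := Nat.sub_pos_of_lt hklt
  have hadd : φ n0 + k = φ (n0 + 1) := by omega
  set c : ℕ → X := fun i => if i = 0 ∨ i = k then p.1 else f^[φ n0 + i] x with hcdef
  set c' : ℕ → X := fun i => if i = 0 ∨ i = k then p.2 else f^[φ n0 + i] y with hc'def
  have key : ∀ (z : X) (g : ℕ → X), (∀ m, f (g m) = g (m + 1)) →
      dist (g (φ n0)) z < η → dist (g (φ (n0 + 1))) z < η →
      IsChain' f δ (fun i => if i = 0 ∨ i = k then z else g (φ n0 + i)) k := by
    intro z g hg h1 h2 i hi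
    have hε1 : η ≤ ε := min_le_left _ _
    have hε2 : η ≤ δ / 2 := min_le_right _ _
    show dist (f (if i = 0 ∨ i = k then z else g (φ n0 + i)))
        (if i + 1 = 0 ∨ i + 1 = k then z else g (φ n0 + (i + 1))) ≤ δ
    by_cases hi0 : i = 0
    · subst hi0
      rw [if_pos (Or.inl rfl)]
      have hfz : dist (f z) (f (g (φ n0))) < δ / 2 :=
        hεf (by rw [dist_comm]; exact lt_of_lt_of_le h1 hε1)
      by_cases h1k : 1 = k
      · rw [if_pos (Or.inr h1k)]
        have e1 : f (g (φ n0)) = g (φ (n0 + 1)) := by rw [hg]; congr 1; omega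
        calc dist (f z) z ≤ dist (f z) (f (g (φ n0))) + dist (f (g (φ n0))) z :=
              dist_triangle _ _ _
          _ ≤ δ / 2 + η := add_le_add hfz.le (by rw [e1]; exact h2.le)
          _ ≤ δ := by linarith
      · rw [if_neg (by omega)]
        rw [show (0 : ℕ) + 1 = 1 from rfl] at *
        have e1 : g (φ n0 + 1) = f (g (φ n0)) := (hg _).symm
        rw [e1]
        linarith
    · rw [if_neg (by omega)]
      by_cases hik : i + 1 = k
      · rw [if_pos (Or.inr hik), hg]
        have e1 : φ n0 + i + 1 = φ (n0 + 1) := by omega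
        rw [e1]
        linarith
      · rw [if_neg (by omega), hg]
        have e1 : φ n0 + i + 1 = φ n0 + (i + 1) := by omega
        rw [e1]
        simp [hδ.le]
  have hiter : ∀ m : ℕ, f (f^[m] x) = f^[m + 1] x := fun m => (Function.iterate_succ_apply' f m x).symm
  have hiter' : ∀ m : ℕ, f (f^[m] y) = f^[m + 1] y := fun m => (Function.iterate_succ_apply' f m y).symm
  refine ⟨k, hk, c, c', ?_, ?_, by simp [hcdef], by simp [hcdef, hk.ne'],
    by simp [hc'def], by simp [hc'def, hk.ne'], ?_⟩
  · exact key p.1 (fun m => f^[m] x) hiter (hNx n0 le_rfl) (hNx (n0 + 1) (Nat.le_succ _))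
  · exact key p.2 (fun m => f^[m] y) hiter' (hNy n0 le_rfl) (hNy (n0 + 1) (Nat.le_succ _))
  · intro i hik
    by_cases hi : i = 0 ∨ i = k
    · simp only [hcdef, hc'def, if_pos hi]
      linarith
    · simp only [hcdef, hc'def, if_neg hi]
      have := hr0le (φ n0 + i)
      linarith
end

section
/- Let X be a compact metric space and f : X → X continuous. If (x, y) ∈ X² is a proximal pair for f (liminf_{n→∞} d(fⁿ(x), fⁿ(y)) = 0), then every (z, w) in the omega-limit set ω((x,y), f × f) lies in CR(f)² and satisfies z ~ w, where ~ is the chain relation: for every δ > 0 there are m, N > 0 such that for all n ≥ N there exist δ-chains in CR(f) of length mn from z to w and from w to z. -/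
open Metric Filter Set
open scoped Classical

section Aux

open Function

variable {Y : Type*} [MetricSpace Y]

/-- Auxiliary omega limit set. -/
def OmegaAux (g : Y → Y) (p : Y) : Set Y :=
  {q | ∃ φ : ℕ → ℕ, StrictMono φ ∧ Tendsto (fun n => g^[φ n] p) atTop (nhds q)}

lemma omegaAux_times {g : Y → Y} {p q : Y} (hq : q ∈ OmegaAux g p) {ε : ℝ} (hε : 0 < ε)
    (N : ℕ) : ∃ n ≥ N, dist (g^[n] p) q ≤ ε := by
  obtain ⟨φ, hφ, ht⟩ := hq
  obtain ⟨M, hM⟩ := (Metric.tendsto_atTop.1 ht) ε hε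
  refine ⟨φ (max M N), le_trans (le_max_right M N) hφ.le_apply, (hM (max M N) (le_max_left M N)).le⟩

variable [CompactSpace Y]

lemma omegaAux_attract (g : Y → Y) (p : Y) {ε : ℝ} (hε : 0 < ε) :
    ∃ N : ℕ, ∀ n ≥ N, ∃ q ∈ OmegaAux g p, dist (g^[n] p) q ≤ ε := by
  by_contra hcon
  push_neg at hcon
  have hfreq : ∃ᶠ n in atTop, ∀ q ∈ OmegaAux g p, ε < dist (g^[n] p) q := by
    rw [frequently_atTop]
    intro N
    obtain ⟨n, hn, h2⟩ := hcon N
    exact ⟨n, hn, fun q hq => h2 q hq⟩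
  obtain ⟨φ, hφ, hP⟩ := Filter.extraction_of_frequently_atTop hfreq
  obtain ⟨a, -, θ, hθ, hta⟩ := IsCompact.tendsto_subseq (x := fun n => g^[φ n] p)
    isCompact_univ (fun n => Set.mem_univ _)
  have haΩ : a ∈ OmegaAux g p := ⟨φ ∘ θ, hφ.comp hθ, hta⟩
  obtain ⟨M, hM⟩ := (Metric.tendsto_atTop.1 hta) ε hε
  exact absurd (hM M le_rfl) (not_lt.2 (hP (θ M) a haΩ).le)

lemma uc_aux {g : Y → Y} (hg : Continuous g) {ε : ℝ} (hε : 0 < ε) :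
    ∃ η > 0, ∀ a b : Y, dist a b ≤ η → dist (g a) (g b) ≤ ε := by
  obtain ⟨t, ht, h⟩ := Metric.uniformContinuous_iff.1
    (CompactSpace.uniformContinuous_of_continuous hg) ε hε
  exact ⟨t / 2, by positivity, fun a b hab => (h (lt_of_le_of_lt hab (by linarith))).le⟩

lemma omegaAux_chain {g : Y → Y} (hg : Continuous g) (p : Y) {A B : Y}
    (hA : A ∈ OmegaAux g p) (hB : B ∈ OmegaAux g p) {δ : ℝ} (hδ : 0 < δ) :
    ∃ k > 0, ∃ c : ℕ → Y, IsChain' g δ c k ∧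
      (∀ i ≤ k, c i ∈ OmegaAux g p) ∧ c 0 = A ∧ c k = B := by
  obtain ⟨t, ht, hUC⟩ := uc_aux hg (half_pos hδ)
  set η := min t (δ / 2) with hηdef
  have hη0 : 0 < η := lt_min ht (half_pos hδ)
  have hηt : η ≤ t := min_le_left _ _
  have hηδ : η ≤ δ / 2 := min_le_right _ _
  obtain ⟨N, hN⟩ := omegaAux_attract g p hη0
  obtain ⟨n₁, hn₁N, hn₁⟩ := omegaAux_times hA hη0 N
  obtain ⟨n₂, hn₂n₁, hn₂⟩ := omegaAux_times hB hη0 (n₁ + 1)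
  have hq : ∀ m : ℕ, ∃ q ∈ OmegaAux g p, dist (g^[m + N] p) q ≤ η :=
    fun m => hN (m + N) (Nat.le_add_left N m)
  choose q hqΩ hqd using hq
  set k := n₂ - n₁ with hkdef
  have hk0 : 0 < k := by omega
  have hn₁k : n₁ + k = n₂ := by omega
  set c : ℕ → Y := fun i => if i = 0 then A else if k ≤ i then B else q (n₁ + i - N) with hcdef
  have hest : ∀ i ≤ k, dist (c i) (g^[n₁ + i] p) ≤ η := by
    intro i hi
    rcases Nat.eq_zero_or_pos i with h0 | hpos
    · subst h0
      simpa [hcdef, dist_comm] using hn₁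
    · by_cases hik : k ≤ i
      · have : i = k := le_antisymm hi hik
        subst this
        have : c k = B := by simp [hcdef, hk0.ne']
        rw [this, hn₁k, dist_comm]
        exact hn₂
      · have hci : c i = q (n₁ + i - N) := by simp [hcdef, hpos.ne', hik]
        have harg : n₁ + i - N + N = n₁ + i := by omega
        rw [hci, dist_comm]
        have := hqd (n₁ + i - N)
        rwa [harg] at this
  refine ⟨k, hk0, c, ?_, ?_, by simp [hcdef], by simp [hcdef, hk0.ne']⟩
  · intro i hi
    have h1 : dist (g (c i)) (g (g^[n₁ + i] p)) ≤ δ / 2 :=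
      hUC _ _ (le_trans (hest i hi.le) hηt)
    have h2 : dist (g (g^[n₁ + i] p)) (c (i + 1)) ≤ η := by
      have h3 := hest (i + 1) hi
      have harg : n₁ + (i + 1) = n₁ + i + 1 := rfl
      rw [harg, Function.iterate_succ_apply' g (n₁ + i) p] at h3
      rw [dist_comm]
      exact h3
    calc dist (g (c i)) (c (i + 1))
        ≤ dist (g (c i)) (g (g^[n₁ + i] p)) + dist (g (g^[n₁ + i] p)) (c (i + 1)) :=
          dist_triangle _ _ _
      _ ≤ δ / 2 + η := add_le_add h1 h2
      _ ≤ δ := by linarith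
  · intro i hi
    rcases Nat.eq_zero_or_pos i with h0 | hpos
    · subst h0; simpa [hcdef] using hA
    · by_cases hik : k ≤ i
      · have hci : c i = B := by simp [hcdef, hpos.ne', hik]
        rw [hci]; exact hB
      · have hci : c i = q (n₁ + i - N) := by simp [hcdef, hpos.ne', hik]
        rw [hci]; exact hqΩ _

lemma omegaAux_subset_CR {g : Y → Y} (hg : Continuous g) (p : Y) :
    OmegaAux g p ⊆ CR g := by
  intro a ha δ hδ
  obtain ⟨k, hk, c, hc, -, h0, hkk⟩ := omegaAux_chain hg p ha ha hδ
  exact ⟨k, hk, c, hc, h0, hkk⟩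

lemma chain_concat_aux (f : Y → Y) (δ : ℝ) {c d : ℕ → Y} {k l : ℕ}
    (hc : IsChain' f δ c k) (hd : IsChain' f δ d l) (hcd : c k = d 0)
    (hcS : ∀ i ≤ k, c i ∈ CR f) (hdS : ∀ i ≤ l, d i ∈ CR f) :
    ∃ e : ℕ → Y, IsChain' f δ e (k + l) ∧ (∀ i ≤ k + l, e i ∈ CR f) ∧
      e 0 = c 0 ∧ e (k + l) = d l := by
  refine ⟨fun i => if i < k then c i else d (i - k), ?_, ?_, ?_, ?_⟩
  · intro i hi
    by_cases h1 : i < k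
    · by_cases h2 : i + 1 < k
      · simpa [h1, h2] using hc i h1
      · have hik : i + 1 = k := by omega
        have hsub : i + 1 - k = 0 := by omega
        simp only [if_pos h1, if_neg h2, hsub]
        rw [← hcd, ← hik]
        exact hc i h1
    · have hsub : i + 1 - k = i - k + 1 := by omega
      simp only [if_neg h1, if_neg (by omega : ¬ i + 1 < k), hsub]
      exact hd (i - k) (by omega)
  · intro i hi
    by_cases h1 : i < k
    · simpa [h1] using hcS i h1.le
    · simpa [h1] using hdS (i - k) (by omega)
  · by_cases h1 : 0 < k
    · simp [h1]
    · have hk0 : k = 0 := by omega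
      subst hk0
      simpa using hcd.symm
  · have : ¬ (k + l < k) := by omega
    simp [this, Nat.add_sub_cancel_left]

lemma chain_repeat_aux (f : Y → Y) (δ : ℝ) {e : ℕ → Y} {b : ℕ} {z : Y}
    (he : IsChain' f δ e b) (heS : ∀ i ≤ b, e i ∈ CR f) (h0 : e 0 = z) (hb : e b = z) :
    ∀ n : ℕ, ∃ c : ℕ → Y, IsChain' f δ c (b * n) ∧ (∀ i ≤ b * n, c i ∈ CR f) ∧
      c 0 = z ∧ c (b * n) = z := by
  intro n
  induction n with
  | zero =>
    refine ⟨fun _ => z, ?_, fun i _ => h0 ▸ heS 0 (Nat.zero_le _), rfl, rfl⟩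
    intro i hi
    simp at hi
  | succ n ih =>
    obtain ⟨c, hc, hcS, hc0, hck⟩ := ih
    obtain ⟨e', he', he'S, he'0, he'k⟩ :=
      chain_concat_aux f δ hc he (by rw [hck, h0]) hcS heS
    rw [Nat.mul_succ]
    exact ⟨e', he', he'S, by rw [he'0, hc0], by rw [he'k, hb]⟩

end Aux

section Aux2

variable {X : Type*} [MetricSpace X]

lemma chain_fst_aux {f : X → X} {δ : ℝ} {C : ℕ → X × X} {k : ℕ}
    (hC : IsChain' (fun p : X × X => (f p.1, f p.2)) δ C k) :
    IsChain' f δ (fun i => (C i).1) k := by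
  intro i hi
  have := hC i hi
  rw [Prod.dist_eq] at this
  exact le_trans (le_max_left _ _) this

lemma chain_snd_aux {f : X → X} {δ : ℝ} {C : ℕ → X × X} {k : ℕ}
    (hC : IsChain' (fun p : X × X => (f p.1, f p.2)) δ C k) :
    IsChain' f δ (fun i => (C i).2) k := by
  intro i hi
  have := hC i hi
  rw [Prod.dist_eq] at this
  exact le_trans (le_max_right _ _) this

lemma iterF_aux {f : X → X} : ∀ (n : ℕ) (p : X × X),
    (fun p : X × X => (f p.1, f p.2))^[n] p = (f^[n] p.1, f^[n] p.2) := by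
  intro n
  induction n with
  | zero => intro p; simp
  | succ n ih =>
    intro p
    rw [Function.iterate_succ_apply' _ n p, ih p,
      Function.iterate_succ_apply' f n p.1, Function.iterate_succ_apply' f n p.2]

lemma omegaAux_pair_proj {f : X → X} {x y : X} {q : X × X}
    (hq : q ∈ OmegaAux (fun p : X × X => (f p.1, f p.2)) (x, y)) :
    q.1 ∈ OmegaAux f x ∧ q.2 ∈ OmegaAux f y := by
  obtain ⟨φ, hφ, ht⟩ := hq
  have ht' : Tendsto (fun n => (f^[φ n] x, f^[φ n] y)) atTop (nhds q) := by
    simpa [iterF_aux] using ht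
  constructor
  · exact ⟨φ, hφ, (continuous_fst.tendsto q).comp ht'⟩
  · exact ⟨φ, hφ, (continuous_snd.tendsto q).comp ht'⟩

variable [CompactSpace X]

lemma proximal_diag_aux (f : X → X) (x y : X) (h : ProximalPair f x y) :
    ∃ u : X, (u, u) ∈ OmegaAux (fun p : X × X => (f p.1, f p.2)) (x, y) := by
  have hfreq : ∀ n : ℕ, ∃ᶠ m in atTop, dist (f^[m] x) (f^[m] y) < 1 / (n + 1) := by
    intro n
    by_contra hc
    rw [Filter.not_frequently] at hc
    have hev : ∀ᶠ m in atTop, (1 : ℝ) / (n + 1) ≤ dist (f^[m] x) (f^[m] y) :=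
      hc.mono fun m hm => not_lt.1 hm
    obtain ⟨C, hC⟩ := Metric.isBounded_iff.1 (isCompact_univ (X := X)).isBounded
    have hbdd : Filter.IsBoundedUnder (· ≤ ·) atTop
        (fun m : ℕ => dist (f^[m] x) (f^[m] y)) :=
      isBoundedUnder_of ⟨C, fun m => hC (Set.mem_univ _) (Set.mem_univ _)⟩
    have hle : (1 : ℝ) / (n + 1) ≤ Filter.liminf
        (fun m : ℕ => dist (f^[m] x) (f^[m] y)) Filter.atTop :=
      Filter.le_liminf_of_le hbdd.isCoboundedUnder_ge hev
    rw [h] at hle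
    have : (0 : ℝ) < 1 / (n + 1) := by positivity
    linarith
  obtain ⟨φ, hφ, hφd⟩ := Filter.extraction_forall_of_frequently hfreq
  obtain ⟨q, -, θ, hθ, htq⟩ := IsCompact.tendsto_subseq
    (x := fun n => ((f^[φ n] x, f^[φ n] y) : X × X)) isCompact_univ (fun n => Set.mem_univ _)
  have h1 : Tendsto (fun n => f^[φ (θ n)] x) atTop (nhds q.1) :=
    (continuous_fst.tendsto q).comp htq
  have h2 : Tendsto (fun n => f^[φ (θ n)] y) atTop (nhds q.2) :=
    (continuous_snd.tendsto q).comp htq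
  have hd : Tendsto (fun n => dist (f^[φ (θ n)] x) (f^[φ (θ n)] y)) atTop
      (nhds (dist q.1 q.2)) := h1.dist h2
  have hd0 : Tendsto (fun n => dist (f^[φ (θ n)] x) (f^[φ (θ n)] y)) atTop (nhds 0) := by
    apply squeeze_zero (fun n => dist_nonneg) (g := fun n : ℕ => 1 / ((n : ℝ) + 1))
    · intro n
      have hle : (n : ℝ) + 1 ≤ (θ n : ℝ) + 1 := by
        have := hθ.le_apply (x := n)
        exact_mod_cast by omega
      refine le_trans (hφd (θ n)).le ?_
      apply one_div_le_one_div_of_le (by positivity) hle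
    · exact tendsto_one_div_add_atTop_nhds_zero_nat
  have hqq : q.1 = q.2 := by
    have := tendsto_nhds_unique hd hd0
    exact dist_eq_zero.1 this
  refine ⟨q.1, φ ∘ θ, hφ.comp hθ, ?_⟩
  have hq' : ((q.1 : X), (q.1 : X)) = q := Prod.ext_iff.2 ⟨rfl, hqq⟩
  rw [hq']
  simpa [iterF_aux, Function.comp_def] using htq

end Aux2

/-- omega-limit points of a proximal pair are chain related. -/
theorem omegaLimit_of_proximal_chainRel {X : Type*} [MetricSpace X] [CompactSpace X]
    (f : X → X) (hf : Continuous f) (x y : X) (h : ProximalPair f x y) :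
    ∀ p ∈ OmegaLimit2 f x y, p.1 ∈ CR f ∧ p.2 ∈ CR f ∧ ChainRel f p.1 p.2 := by
  intro p hp
  set F : X × X → X × X := fun q => (f q.1, f q.2) with hF
  have hFc : Continuous F := (hf.comp continuous_fst).prodMk (hf.comp continuous_snd)
  have hpΩ : p ∈ OmegaAux F (x, y) := by
    obtain ⟨φ, hφ, ht⟩ := hp
    exact ⟨φ, hφ, by simpa [hF, iterF_aux] using ht⟩
  obtain ⟨u, huΩ⟩ := proximal_diag_aux f x y h
  have hproj : ∀ {q : X × X}, q ∈ OmegaAux F (x, y) → q.1 ∈ CR f ∧ q.2 ∈ CR f := by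
    intro q hq
    obtain ⟨h1, h2⟩ := omegaAux_pair_proj hq
    exact ⟨omegaAux_subset_CR hf x h1, omegaAux_subset_CR hf y h2⟩
  refine ⟨(hproj hpΩ).1, (hproj hpΩ).2, ?_⟩
  intro δ hδ
  obtain ⟨k₁, hk₁, C1, hC1, hC1Ω, hC10, hC1k⟩ := omegaAux_chain hFc (x, y) hpΩ huΩ hδ
  obtain ⟨k₂, hk₂, C2, hC2, hC2Ω, hC20, hC2k⟩ := omegaAux_chain hFc (x, y) huΩ hpΩ hδ
  have hm1 : ∀ i ≤ k₁, (C1 i).1 ∈ CR f ∧ (C1 i).2 ∈ CR f := fun i hi => hproj (hC1Ω i hi)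
  have hm2 : ∀ i ≤ k₂, (C2 i).1 ∈ CR f ∧ (C2 i).2 ∈ CR f := fun i hi => hproj (hC2Ω i hi)
  have c1f : IsChain' f δ (fun i => (C1 i).1) k₁ := chain_fst_aux hC1
  have c1s : IsChain' f δ (fun i => (C1 i).2) k₁ := chain_snd_aux hC1
  have c2f : IsChain' f δ (fun i => (C2 i).1) k₂ := chain_fst_aux hC2
  have c2s : IsChain' f δ (fun i => (C2 i).2) k₂ := chain_snd_aux hC2
  have hj1 : (C1 k₁).1 = (C2 0).1 := by rw [hC1k, hC20]
  have hj2 : (C1 k₁).1 = (C2 0).2 := by rw [hC1k, hC20]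
  have hj3 : (C1 k₁).2 = (C2 0).1 := by rw [hC1k, hC20]
  have hj4 : (C1 k₁).2 = (C2 0).2 := by rw [hC1k, hC20]
  -- cycle at z = p.1
  obtain ⟨cz, hcz, hczS, hcz0, hczk⟩ := chain_concat_aux f δ c1f c2f hj1
    (fun i hi => (hm1 i hi).1) (fun i hi => (hm2 i hi).1)
  -- cycle at w = p.2
  obtain ⟨cw, hcw, hcwS, hcw0, hcwk⟩ := chain_concat_aux f δ c1s c2s hj4
    (fun i hi => (hm1 i hi).2) (fun i hi => (hm2 i hi).2)
  -- chain z -> w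
  obtain ⟨ezw, hezw, hezwS, hezw0, hezwk⟩ := chain_concat_aux f δ c1f c2s hj2
    (fun i hi => (hm1 i hi).1) (fun i hi => (hm2 i hi).2)
  -- chain w -> z
  obtain ⟨ewz, hewz, hewzS, hewz0, hewzk⟩ := chain_concat_aux f δ c1s c2f hj3
    (fun i hi => (hm1 i hi).2) (fun i hi => (hm2 i hi).1)
  set b := k₁ + k₂ with hb
  have hb0 : 0 < b := by omega
  refine ⟨b, hb0, 1, one_pos, ?_⟩
  intro n hn
  have hbn : b * (n - 1) + b = b * n := by
    cases n with
    | zero => omega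
    | succ m => simp [Nat.mul_succ]
  have hcz0' : cz 0 = p.1 := by rw [hcz0, hC10]
  have hczk' : cz b = p.1 := by rw [hczk, hC2k]
  have hcw0' : cw 0 = p.2 := by rw [hcw0, hC10]
  have hcwk' : cw b = p.2 := by rw [hcwk, hC2k]
  constructor
  · obtain ⟨r, hr, hrS, hr0, hrk⟩ := chain_repeat_aux f δ hcz hczS hcz0' hczk' (n - 1)
    obtain ⟨e, he, heS, he0, hek⟩ := chain_concat_aux f δ hr hezw
      (by rw [hrk, hezw0, hC10]) hrS hezwS
    rw [hbn] at he heS hek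
    exact ⟨e, he, heS, by rw [he0, hr0], by rw [hek, hezwk, hC2k]⟩
  · obtain ⟨r, hr, hrS, hr0, hrk⟩ := chain_repeat_aux f δ hcw hcwS hcw0' hcwk' (n - 1)
    obtain ⟨e, he, heS, he0, hek⟩ := chain_concat_aux f δ hr hewz
      (by rw [hrk, hewz0, hC10]) hrS hewzS
    rw [hbn] at he heS hek
    exact ⟨e, he, heS, by rw [he0, hr0], by rw [hek, hewzk, hC2k]⟩
end

section
/- Let X be a compact metric space and f : X → X continuous. If (x, y) is a Li-Yorke pair for f, then there exists (z, w) ∈ ω((x,y), f × f) with z ≠ w, (z, w) ∈ CR(f)², and z ~ w (chain relation). -/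
open Metric Filter Set
open scoped Classical

section AuxLY

variable {X : Type*} [MetricSpace X] [CompactSpace X]

/-- The product map `f × f`. -/
private def gmap (f : X → X) : X × X → X × X := fun p => (f p.1, f p.2)

/-- The orbit of `(x, y)` under `f × f`. -/
private def orb (f : X → X) (x y : X) : ℕ → X × X := fun n => (f^[n] x, f^[n] y)

private lemma orb_succ (f : X → X) (x y : X) (n : ℕ) :
    gmap f (orb f x y n) = orb f x y (n + 1) := by
  simp [gmap, orb, Function.iterate_succ_apply']

private lemma mem_omega_iff {f : X → X} {x y : X} {p : X × X} :
    p ∈ OmegaLimit2 f x y ↔ ∃ φ : ℕ → ℕ, StrictMono φ ∧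
      Tendsto (orb f x y ∘ φ) atTop (nhds p) := Iff.rfl

private lemma dist_swap (a b : X × X) : dist a.swap b.swap = dist a b := by
  rw [Prod.dist_eq, Prod.dist_eq, max_comm]
  rfl

private lemma dist_fst_le_gmap (f : X → X) (a b : X × X) :
    dist (f a.1) b.1 ≤ dist (gmap f a) b := by
  rw [Prod.dist_eq]
  exact le_max_left _ _

private lemma dist_snd_le_gmap (f : X → X) (a b : X × X) :
    dist (f a.2) b.2 ≤ dist (gmap f a) b := by
  rw [Prod.dist_eq]
  exact le_max_right _ _

/-- The orbit eventually stays close to the omega-limit set. -/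
private lemma orbit_approach (f : X → X) (x y : X) {η : ℝ} (hη : 0 < η) :
    ∃ N : ℕ, ∀ n ≥ N, ∃ p ∈ OmegaLimit2 f x y, dist (orb f x y n) p < η := by
  by_contra hcon
  push_neg at hcon
  have hfreq : ∃ᶠ n in atTop, ∀ p ∈ OmegaLimit2 f x y, η ≤ dist (orb f x y n) p := by
    rw [Filter.frequently_atTop]
    intro N
    obtain ⟨n, hn, hn2⟩ := hcon N
    exact ⟨n, hn, hn2⟩
  obtain ⟨φ, hφ, hP⟩ := Filter.extraction_of_frequently_atTop hfreq
  obtain ⟨q, ψ, hψ, hq⟩ := CompactSpace.tendsto_subseq (orb f x y ∘ φ)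
  have hqΩ : q ∈ OmegaLimit2 f x y := mem_omega_iff.mpr ⟨φ ∘ ψ, hφ.comp hψ, hq⟩
  have h1 : Tendsto (fun n => dist ((orb f x y ∘ φ ∘ ψ) n) q) atTop (nhds (dist q q)) :=
    Filter.Tendsto.dist hq tendsto_const_nhds
  rw [dist_self] at h1
  have h2 : η ≤ (0 : ℝ) :=
    ge_of_tendsto h1 (Filter.Eventually.of_forall fun n => hP (ψ n) q hqΩ)
  linarith

/-- Chains inside the omega-limit set between any two of its points. -/
private lemma chain_in_omega {f : X → X} (hf : Continuous f) (x y : X) {a b : X × X}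
    (ha : a ∈ OmegaLimit2 f x y) (hb : b ∈ OmegaLimit2 f x y) {δ : ℝ} (hδ : 0 < δ) :
    ∃ L > 0, ∃ c : ℕ → X × X, IsChain' (gmap f) δ c L ∧
      (∀ i ≤ L, c i ∈ OmegaLimit2 f x y) ∧ c 0 = a ∧ c L = b := by
  have hg : Continuous (gmap f) := (hf.comp continuous_fst).prodMk (hf.comp continuous_snd)
  have hug : UniformContinuous (gmap f) := CompactSpace.uniformContinuous_of_continuous hg
  obtain ⟨η₀, hη₀, hη₀'⟩ := Metric.uniformContinuous_iff.mp hug (δ / 3) (by linarith)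
  set η := min η₀ (δ / 3) with hηdef
  have hη : 0 < η := lt_min hη₀ (by linarith)
  have hηle : η ≤ η₀ := min_le_left _ _
  have hηle' : η ≤ δ / 3 := min_le_right _ _
  obtain ⟨N, hN⟩ := orbit_approach f x y hη
  have key : ∀ n : ℕ, ∃ p : X × X,
      p ∈ OmegaLimit2 f x y ∧ (N ≤ n → dist (orb f x y n) p < η) := by
    intro n
    rcases le_or_gt N n with hle | hlt
    · obtain ⟨p, hp, hd⟩ := hN n hle
      exact ⟨p, hp, fun _ => hd⟩
    · exact ⟨a, ha, fun hc => absurd hc (by omega)⟩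
  choose P hPΩ hPd using key
  obtain ⟨φa, hφa, hta⟩ := mem_omega_iff.mp ha
  obtain ⟨φb, hφb, htb⟩ := mem_omega_iff.mp hb
  obtain ⟨ka, hka⟩ := (Metric.tendsto_atTop.mp hta) η hη
  obtain ⟨kb, hkb⟩ := (Metric.tendsto_atTop.mp htb) η hη
  set n₁ := φa (max ka N) with hn₁def
  have hn₁N : N ≤ n₁ := le_trans (le_max_right ka N) hφa.le_apply
  have hda : dist (orb f x y n₁) a < η := hka (max ka N) (le_max_left _ _)
  set n₂ := φb (max kb (n₁ + 1)) with hn₂def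
  have hn₂ : n₁ < n₂ := lt_of_lt_of_le (Nat.lt_succ_self n₁)
    (le_trans (le_max_right kb (n₁ + 1)) hφb.le_apply)
  have hdb : dist (orb f x y n₂) b < η := hkb (max kb (n₁ + 1)) (le_max_left _ _)
  set L := n₂ - n₁ with hLdef
  have hL : 0 < L := by omega
  set c : ℕ → X × X :=
    (fun i => if i = 0 then a else if n₁ + i < n₂ then P (n₁ + i) else b) with hcdef
  have hc0 : c 0 = a := by simp [hcdef]
  have hcL : c L = b := by
    simp only [hcdef]
    rw [if_neg (by omega : ¬ L = 0), if_neg (by omega : ¬ n₁ + L < n₂)]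
  refine ⟨L, hL, c, ?_, ?_, hc0, hcL⟩
  · -- chain property
    intro i hi
    have hiL : n₁ + i < n₂ := by omega
    have hclose : dist (c i) (orb f x y (n₁ + i)) < η := by
      rcases eq_or_ne i 0 with rfl | hi0
      · rw [hc0, dist_comm]
        exact hda
      · simp only [hcdef]
        rw [if_neg hi0, if_pos hiL, dist_comm]
        exact hPd (n₁ + i) (by omega)
    have hclose2 : dist (orb f x y (n₁ + i + 1)) (c (i + 1)) < η := by
      simp only [hcdef]
      rw [if_neg (by omega : ¬ i + 1 = 0)]
      rcases lt_or_ge (n₁ + (i + 1)) n₂ with hlt | hge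
      · rw [if_pos hlt]
        have := hPd (n₁ + (i + 1)) (by omega)
        simpa [Nat.add_assoc] using this
      · rw [if_neg (not_lt.mpr hge)]
        have hEq : n₁ + i + 1 = n₂ := by omega
        rw [hEq]
        exact hdb
    have h1 : dist (gmap f (c i)) (gmap f (orb f x y (n₁ + i))) < δ / 3 :=
      hη₀' (lt_of_lt_of_le hclose hηle)
    have hclose2' : dist (gmap f (orb f x y (n₁ + i))) (c (i + 1)) < η := by
      rw [orb_succ]
      exact hclose2
    calc dist (gmap f (c i)) (c (i + 1))
        ≤ dist (gmap f (c i)) (gmap f (orb f x y (n₁ + i)))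
            + dist (gmap f (orb f x y (n₁ + i))) (c (i + 1)) := dist_triangle _ _ _
      _ ≤ δ / 3 + η := add_le_add (le_of_lt h1) (le_of_lt hclose2')
      _ ≤ δ := by linarith
  · -- membership
    intro i hiL
    rcases eq_or_ne i 0 with rfl | hi0
    · rw [hc0]; exact ha
    · simp only [hcdef]
      rw [if_neg hi0]
      rcases lt_or_ge (n₁ + i) n₂ with hlt | hge
      · rw [if_pos hlt]; exact hPΩ _
      · rw [if_neg (not_lt.mpr hge)]; exact hb

/-- Both coordinates of a point of the omega-limit set are chain recurrent. -/
private lemma coord_mem_CR {f : X → X} (hf : Continuous f) (x y : X) {p : X × X}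
    (hp : p ∈ OmegaLimit2 f x y) : p.1 ∈ CR f ∧ p.2 ∈ CR f := by
  constructor
  · intro δ hδ
    obtain ⟨L, hL, c, hc, _, h0, hLb⟩ := chain_in_omega hf x y hp hp hδ
    refine ⟨L, hL, fun i => (c i).1, fun i hi => ?_, by simp [h0], by simp [hLb]⟩
    exact le_trans (dist_fst_le_gmap f (c i) (c (i + 1))) (hc i hi)
  · intro δ hδ
    obtain ⟨L, hL, c, hc, _, h0, hLb⟩ := chain_in_omega hf x y hp hp hδ
    refine ⟨L, hL, fun i => (c i).2, fun i hi => ?_, by simp [h0], by simp [hLb]⟩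
    exact le_trans (dist_snd_le_gmap f (c i) (c (i + 1))) (hc i hi)

/-- Projecting a product chain through a diagonal point gives a mixed chain. -/
private lemma mixed_project {f : X → X} {δ : ℝ} {E : ℕ → X × X} {K A : ℕ}
    (hAK : A < K)
    (hchain : ∀ i, dist (gmap f (E i)) (E (i + 1)) ≤ δ)
    (hdiag : (E A).1 = (E A).2) :
    ∃ c : ℕ → X, IsChain' f δ c K ∧ (∀ i, c i = (E i).1 ∨ c i = (E i).2) ∧
      c 0 = (E 0).1 ∧ c K = (E K).2 := by
  refine ⟨fun i => if i ≤ A then (E i).1 else (E i).2, ?_, ?_, ?_, ?_⟩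
  · intro i _
    dsimp only
    rcases le_or_gt (i + 1) A with h1 | h1
    · rw [if_pos (by omega : i ≤ A), if_pos h1]
      exact le_trans (dist_fst_le_gmap f (E i) (E (i + 1))) (hchain i)
    · rw [if_neg (not_le.mpr h1)]
      rcases le_or_gt i A with h2 | h2
      · have hiA : i = A := by omega
        rw [if_pos h2, hiA, hdiag]
        exact le_trans (dist_snd_le_gmap f (E A) (E (A + 1))) (hchain A)
      · rw [if_neg (not_le.mpr h2)]
        exact le_trans (dist_snd_le_gmap f (E i) (E (i + 1))) (hchain i)
  · intro i
    dsimp only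
    rcases le_or_gt i A with h | h
    · exact Or.inl (if_pos h)
    · exact Or.inr (if_neg (not_le.mpr h))
  · dsimp only
    rw [if_pos (Nat.zero_le A)]
  · dsimp only
    rw [if_neg (not_le.mpr hAK)]

end AuxLY

/-- a Li-Yorke pair yields a non-diagonal chain related pair
in the omega-limit set. -/
theorem liYorke_yields_chainRel_pair {X : Type*} [MetricSpace X] [CompactSpace X]
    (f : X → X) (hf : Continuous f) (x y : X) (h : LiYorkePair f x y) :
    ∃ p ∈ OmegaLimit2 f x y, p.1 ≠ p.2 ∧ p.1 ∈ CR f ∧ p.2 ∈ CR f ∧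
      ChainRel f p.1 p.2 := by
  obtain ⟨hli, hls⟩ := h
  have hbdd : Bornology.IsBounded (Set.univ : Set X) := isCompact_univ.isBounded
  have hble : ∀ n : ℕ, dist (f^[n] x) (f^[n] y) ≤ Metric.diam (Set.univ : Set X) :=
    fun n => Metric.dist_le_diam_of_mem hbdd (mem_univ _) (mem_univ _)
  have hb1 : Filter.IsBoundedUnder (· ≥ ·) Filter.atTop
      (fun n : ℕ => dist (f^[n] x) (f^[n] y)) :=
    ⟨0, Filter.eventually_map.mpr (Filter.Eventually.of_forall fun n => dist_nonneg)⟩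
  have hb2 : Filter.IsBoundedUnder (· ≤ ·) Filter.atTop
      (fun n : ℕ => dist (f^[n] x) (f^[n] y)) :=
    ⟨Metric.diam (Set.univ : Set X),
      Filter.eventually_map.mpr (Filter.Eventually.of_forall hble)⟩
  set Lsup := Filter.limsup (fun n : ℕ => dist (f^[n] x) (f^[n] y)) Filter.atTop with hLsup
  have hε : 0 < Lsup / 2 := by linarith
  have hfreq : ∃ᶠ n in atTop, Lsup / 2 < dist (f^[n] x) (f^[n] y) :=
    Filter.frequently_lt_of_lt_limsup hb1.isCoboundedUnder_le (by linarith)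
  obtain ⟨φ, hφ, hP⟩ := Filter.extraction_of_frequently_atTop hfreq
  obtain ⟨p, ψ, hψ, hq⟩ := CompactSpace.tendsto_subseq (orb f x y ∘ φ)
  have hpΩ : p ∈ OmegaLimit2 f x y := mem_omega_iff.mpr ⟨φ ∘ ψ, hφ.comp hψ, hq⟩
  have hdistp : Lsup / 2 ≤ dist p.1 p.2 := by
    have hfst : Tendsto (fun n => (orb f x y (φ (ψ n))).1) atTop (nhds p.1) :=
      (continuous_fst.tendsto p).comp hq
    have hsnd : Tendsto (fun n => (orb f x y (φ (ψ n))).2) atTop (nhds p.2) :=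
      (continuous_snd.tendsto p).comp hq
    have h1 : Tendsto (fun n => dist ((orb f x y (φ (ψ n))).1) ((orb f x y (φ (ψ n))).2))
        atTop (nhds (dist p.1 p.2)) := hfst.dist hsnd
    exact ge_of_tendsto h1 (Filter.Eventually.of_forall fun n => le_of_lt (hP (ψ n)))
  have hne : p.1 ≠ p.2 := dist_pos.mp (lt_of_lt_of_le hε hdistp)
  -- diagonal point from proximality
  have hfr : ∀ k : ℕ, ∃ᶠ n in atTop, dist (f^[n] x) (f^[n] y) < 1 / (k + 1) := by
    intro k
    refine Filter.frequently_lt_of_liminf_lt hb2.isCoboundedUnder_ge ?_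
    rw [hli]
    positivity
  obtain ⟨φ₂, hφ₂, hP₂⟩ := Filter.extraction_forall_of_frequently hfr
  obtain ⟨q, ψ₂, hψ₂, hq₂⟩ := CompactSpace.tendsto_subseq (orb f x y ∘ φ₂)
  have hqΩ : q ∈ OmegaLimit2 f x y := mem_omega_iff.mpr ⟨φ₂ ∘ ψ₂, hφ₂.comp hψ₂, hq₂⟩
  have hq12 : q.1 = q.2 := by
    have h1 : Tendsto (fun n => dist ((orb f x y (φ₂ (ψ₂ n))).1) ((orb f x y (φ₂ (ψ₂ n))).2))
        atTop (nhds (dist q.1 q.2)) :=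
      ((continuous_fst.tendsto q).comp hq₂).dist ((continuous_snd.tendsto q).comp hq₂)
    have h2 : Tendsto (fun n : ℕ => dist ((orb f x y (φ₂ (ψ₂ n))).1) ((orb f x y (φ₂ (ψ₂ n))).2))
        atTop (nhds 0) := by
      refine squeeze_zero (fun n => dist_nonneg) (fun n => ?_)
        tendsto_one_div_add_atTop_nhds_zero_nat
      have hle1 : dist (f^[φ₂ (ψ₂ n)] x) (f^[φ₂ (ψ₂ n)] y) < 1 / ((ψ₂ n : ℝ) + 1) := hP₂ (ψ₂ n)
      have hcast : ((n : ℝ) + 1) ≤ ((ψ₂ n : ℝ) + 1) := by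
        exact_mod_cast Nat.succ_le_succ hψ₂.le_apply
      have hdiv : (1 : ℝ) / ((ψ₂ n : ℝ) + 1) ≤ 1 / ((n : ℝ) + 1) :=
        one_div_le_one_div_of_le (by positivity) hcast
      exact le_trans (le_of_lt hle1) hdiv
    exact dist_eq_zero.mp (tendsto_nhds_unique h1 h2)
  refine ⟨p, hpΩ, hne, (coord_mem_CR hf x y hpΩ).1, (coord_mem_CR hf x y hpΩ).2, ?_⟩
  intro δ hδ
  obtain ⟨A, hA, C1, hC1chain, hC1mem, hC10, hC1A⟩ := chain_in_omega hf x y hpΩ hqΩ hδ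
  obtain ⟨B, hB, C2, hC2chain, hC2mem, hC20, hC2B⟩ := chain_in_omega hf x y hqΩ hpΩ hδ
  refine ⟨A + B, by omega, 1, one_pos, fun n hn => ?_⟩
  set m := A + B with hm
  set D : ℕ → X × X := (fun j => if j % m < B then C2 (j % m) else C1 (j % m - B)) with hDdef
  have hD0 : D 0 = q := by
    simp only [hDdef]
    rw [Nat.zero_mod, if_pos hB]
    exact hC20
  have hDp : ∀ t : ℕ, D (m * t + B) = p := by
    intro t
    simp only [hDdef]
    rw [Nat.mul_add_mod, Nat.mod_eq_of_lt (by omega : B < m), if_neg (lt_irrefl B),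
      Nat.sub_self]
    exact hC10
  have hDmem : ∀ j, D j ∈ OmegaLimit2 f x y := by
    intro j
    simp only [hDdef]
    by_cases hj : j % m < B
    · rw [if_pos hj]
      exact hC2mem _ (le_of_lt hj)
    · rw [if_neg hj]
      refine hC1mem _ ?_
      have := Nat.mod_lt j (show 0 < m by omega)
      omega
  have hDchain : ∀ j, dist (gmap f (D j)) (D (j + 1)) ≤ δ := by
    intro j
    have hr : j % m < m := Nat.mod_lt j (by omega)
    have hsucc : (j + 1) % m = (j % m + 1) % m := by
      rw [Nat.add_mod, Nat.mod_eq_of_lt (show 1 < m by omega)]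
    by_cases h1 : j % m + 1 < m
    · have hj1 : (j + 1) % m = j % m + 1 := by rw [hsucc]; exact Nat.mod_eq_of_lt h1
      simp only [hDdef]
      rw [hj1]
      by_cases h2 : j % m < B
      · rw [if_pos h2]
        by_cases h3 : j % m + 1 < B
        · rw [if_pos h3]
          exact hC2chain _ h2
        · have hrB : j % m + 1 = B := by omega
          rw [if_neg h3]
          have hcc : C1 (j % m + 1 - B) = C2 (j % m + 1) := by
            rw [hrB, Nat.sub_self, hC10, ← hC2B]
          rw [hcc]
          exact hC2chain _ h2
      · rw [if_neg h2, if_neg (by omega : ¬ j % m + 1 < B)]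
        have hstep := hC1chain (j % m - B) (by omega : j % m - B < A)
        have heq : j % m + 1 - B = (j % m - B) + 1 := by omega
        rw [heq]
        exact hstep
    · have h1' : j % m + 1 = m := by omega
      have hj1 : (j + 1) % m = 0 := by rw [hsucc, h1', Nat.mod_self]
      simp only [hDdef]
      rw [hj1, if_pos hB, if_neg (by omega : ¬ j % m < B)]
      have hstep := hC1chain (j % m - B) (by omega : j % m - B < A)
      have h2 : (j % m - B) + 1 = A := by omega
      rw [h2] at hstep
      rw [hC20, ← hC1A]
      exact hstep
  set E : ℕ → X × X := (fun i => if i < A then C1 i else D (i - A)) with hEdef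
  have hE0 : E 0 = p := by
    simp only [hEdef]
    rw [if_pos hA]
    exact hC10
  have hEA : E A = q := by
    simp only [hEdef]
    rw [if_neg (lt_irrefl A), Nat.sub_self]
    exact hD0
  have hEchain : ∀ i, dist (gmap f (E i)) (E (i + 1)) ≤ δ := by
    intro i
    simp only [hEdef]
    rcases lt_or_ge (i + 1) A with h1 | h1
    · rw [if_pos (by omega : i < A), if_pos h1]
      exact hC1chain i (by omega)
    · rw [if_neg (not_lt.mpr h1)]
      rcases lt_or_ge i A with h2 | h2
      · have hiA : i + 1 = A := by omega
        rw [if_pos h2]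
        have hcc : D (i + 1 - A) = C1 (i + 1) := by
          rw [hiA, Nat.sub_self, hD0, ← hC1A]
        rw [hcc]
        exact hC1chain i h2
      · rw [if_neg (not_lt.mpr h2)]
        have heq : i + 1 - A = (i - A) + 1 := by omega
        rw [heq]
        exact hDchain (i - A)
  have hEmem : ∀ i, E i ∈ OmegaLimit2 f x y := by
    intro i
    simp only [hEdef]
    by_cases hi : i < A
    · rw [if_pos hi]
      exact hC1mem i (le_of_lt hi)
    · rw [if_neg hi]
      exact hDmem _
  have hmn : A < m * n := by
    have h1 : m ≤ m * n := Nat.le_mul_of_pos_right m (by omega)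
    omega
  have hEend : E (m * n) = p := by
    obtain ⟨n', rfl⟩ : ∃ n', n = n' + 1 := ⟨n - 1, by omega⟩
    have hms : m * (n' + 1) = m * n' + m := Nat.mul_succ m n'
    rw [hms] at hmn ⊢
    simp only [hEdef]
    rw [if_neg (not_lt.mpr (le_of_lt hmn))]
    rw [(by omega : m * n' + m - A = m * n' + B)]
    exact hDp n'
  have hdiag : (E A).1 = (E A).2 := by rw [hEA]; exact hq12
  obtain ⟨c, hcchain, hccoord, hc0, hcK⟩ :=
    mixed_project (f := f) (δ := δ) (E := E) (K := m * n) (A := A) hmn hEchain hdiag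
  have hswapchain : ∀ i, dist (gmap f ((E i).swap)) ((E (i + 1)).swap) ≤ δ := by
    intro i
    have h1 : gmap f ((E i).swap) = (gmap f (E i)).swap := rfl
    rw [h1, dist_swap]
    exact hEchain i
  have hdiag' : ((E A).swap).1 = ((E A).swap).2 := by
    rw [hEA]
    exact hq12.symm
  obtain ⟨c', hc'chain, hc'coord, hc'0, hc'K⟩ :=
    mixed_project (f := f) (δ := δ) (E := fun i => (E i).swap) (K := m * n) (A := A)
      hmn hswapchain hdiag'
  constructor
  · refine ⟨c, hcchain, fun i _ => ?_, by rw [hc0, hE0], by rw [hcK, hEend]⟩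
    rcases hccoord i with hcoord | hcoord
    · rw [hcoord]
      exact (coord_mem_CR hf x y (hEmem i)).1
    · rw [hcoord]
      exact (coord_mem_CR hf x y (hEmem i)).2
  · refine ⟨c', hc'chain, fun i _ => ?_, ?_, ?_⟩
    · rcases hc'coord i with hcoord | hcoord
      · rw [hcoord]
        exact (coord_mem_CR hf x y (hEmem i)).2
      · rw [hcoord]
        exact (coord_mem_CR hf x y (hEmem i)).1
    · rw [hc'0, hE0]
      rfl
    · rw [hc'K, hEend]
      rfl
end

section
/- Let X be a compact metric space and f : X → X a continuous map. Suppose: (1) there exists (z, w) ∈ CR(f)² satisfying z ~ w (chain relation) and property*; and (2) for every sequence (x_i)_{i≥0} of points in CR(f) with lim_{i→∞} d(f(x_i), x_{i+1}) = 0, there exists x ∈ X with lim_{n→∞} (1/n)·Σ_{i=0}^{n−1} d(fⁱ(x), x_i) = 0. Then f exhibits distributional chaos of type 1: there exists an uncountable set S ⊆ X such that every pair of distinct points of S is a DC1-pair for f. -/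
open Metric Filter Set
open scoped Classical

lemma markov_lemma (d : ℕ → ℝ) (hd : ∀ i, 0 ≤ d i) (ε : ℝ) (hε : 0 < ε)
    (h : Tendsto (fun n : ℕ => (∑ i ∈ Finset.range n, d i) / n) atTop (nhds 0)) :
    Tendsto (fun n : ℕ => (((Finset.range n).filter fun i => ε ≤ d i).card : ℝ) / n)
      atTop (nhds 0) := by
  have hb : ∀ n : ℕ, (((Finset.range n).filter fun i => ε ≤ d i).card : ℝ) / n
      ≤ (1/ε) * ((∑ i ∈ Finset.range n, d i) / n) := by
    intro n
    rcases Nat.eq_zero_or_pos n with rfl | hn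
    · simp
    have hn' : (0:ℝ) < n := by exact_mod_cast hn
    have key : (((Finset.range n).filter fun i => ε ≤ d i).card : ℝ) * ε
        ≤ ∑ i ∈ Finset.range n, d i := by
      calc (((Finset.range n).filter fun i => ε ≤ d i).card : ℝ) * ε
          = ∑ _i ∈ (Finset.range n).filter fun i => ε ≤ d i, ε := by
            rw [Finset.sum_const, nsmul_eq_mul]
        _ ≤ ∑ i ∈ (Finset.range n).filter fun i => ε ≤ d i, d i :=
            Finset.sum_le_sum (fun i hi => (Finset.mem_filter.1 hi).2)
        _ ≤ _ := Finset.sum_le_sum_of_subset_of_nonneg (Finset.filter_subset _ _)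
            (fun i _ _ => hd i)
    have : (((Finset.range n).filter fun i => ε ≤ d i).card : ℝ)
        ≤ (∑ i ∈ Finset.range n, d i) / ε := (le_div_iff₀ hε).2 key
    calc (((Finset.range n).filter fun i => ε ≤ d i).card : ℝ) / n
        ≤ ((∑ i ∈ Finset.range n, d i) / ε) / n := by gcongr
      _ = (1/ε) * ((∑ i ∈ Finset.range n, d i) / n) := by ring
  have hg : Tendsto (fun n : ℕ => (1/ε) * ((∑ i ∈ Finset.range n, d i) / n)) atTop (nhds 0) := by
    simpa using h.const_mul (1/ε)
  exact squeeze_zero (fun n => by positivity) hb hg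

lemma limsup_eq_one_of (u : ℕ → ℝ) (h0 : ∀ n, 0 ≤ u n) (h1 : ∀ n, u n ≤ 1)
    (hfreq : ∀ η > (0:ℝ), ∀ n₀ : ℕ, ∃ n ≥ n₀, 1 - η ≤ u n) :
    Filter.limsup u Filter.atTop = 1 := by
  have hb : IsBoundedUnder (· ≤ ·) atTop u := ⟨1, Filter.eventually_map.2 (Eventually.of_forall h1)⟩
  have hcb : IsCoboundedUnder (· ≤ ·) atTop u := Filter.isCoboundedUnder_le_of_le _ h0
  apply le_antisymm
  · exact Filter.limsup_le_of_le hcb (Eventually.of_forall h1)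
  · refine le_of_forall_pos_le_add fun η hη => ?_
    have : 1 - η ≤ limsup u atTop :=
      Filter.le_limsup_of_frequently_le (Filter.frequently_atTop.2 (hfreq η hη)) hb
    linarith

noncomputable def bitOf (t : ℝ) (l : ℕ) : Bool :=
  decide (1 ≤ ⌊((l:ℝ)+1)*t⌋ - ⌊(l:ℝ)*t⌋)

lemma floor_diff_01 {t : ℝ} (ht : t ∈ Ioo (0:ℝ) 1) (l : ℕ) :
    ⌊((l:ℝ)+1)*t⌋ - ⌊(l:ℝ)*t⌋ = 0 ∨ ⌊((l:ℝ)+1)*t⌋ - ⌊(l:ℝ)*t⌋ = 1 := by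
  have h1 : ⌊(l:ℝ)*t⌋ ≤ ⌊((l:ℝ)+1)*t⌋ := by
    apply Int.floor_le_floor; nlinarith [ht.1]
  have h2 : ⌊((l:ℝ)+1)*t⌋ ≤ ⌊(l:ℝ)*t⌋ + 1 := by
    have : ((l:ℝ)+1)*t ≤ (l:ℝ)*t + 1 := by nlinarith [ht.2, ht.1]
    calc ⌊((l:ℝ)+1)*t⌋ ≤ ⌊(l:ℝ)*t + 1⌋ := Int.floor_le_floor this
      _ = ⌊(l:ℝ)*t⌋ + 1 := by rw [Int.floor_add_one]
  omega

lemma bitOf_eq_iff {t t' : ℝ} (ht : t ∈ Ioo (0:ℝ) 1) (ht' : t' ∈ Ioo (0:ℝ) 1) (l : ℕ)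
    (h : bitOf t l = bitOf t' l) :
    ⌊((l:ℝ)+1)*t⌋ - ⌊(l:ℝ)*t⌋ = ⌊((l:ℝ)+1)*t'⌋ - ⌊(l:ℝ)*t'⌋ := by
  have e1 := floor_diff_01 ht l
  have e2 := floor_diff_01 ht' l
  unfold bitOf at h
  rcases e1 with e1 | e1 <;> rcases e2 with e2 | e2 <;> rw [e1, e2] at h ⊢ <;> simp_all

lemma bit_diff_infinite {t t' : ℝ} (ht : t ∈ Ioo (0:ℝ) 1) (ht' : t' ∈ Ioo (0:ℝ) 1)
    (hne : t ≠ t') : ∀ M : ℕ, ∃ l ≥ M, bitOf t l ≠ bitOf t' l := by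
  intro M
  by_contra hc
  push_neg at hc
  set g : ℕ → ℤ := fun n => ⌊(n:ℝ)*t⌋ - ⌊(n:ℝ)*t'⌋ with hg
  have hstep : ∀ l ≥ M, g (l+1) = g l := by
    intro l hl
    have := bitOf_eq_iff ht ht' l (hc l hl)
    simp only [hg]
    push_cast
    omega
  have hconst : ∀ n ≥ M, g n = g M := by
    intro n hn
    induction n, hn using Nat.le_induction with
    | base => rfl
    | succ n hn ih => rw [hstep n hn, ih]
  have hd : |t - t'| > 0 := abs_pos.2 (sub_ne_zero.2 hne)
  obtain ⟨n, hn⟩ := exists_nat_gt ((|(g M : ℝ)| + 2) / |t - t'|)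
  have hnM : g (max n M) = g M := hconst _ (le_max_right _ _)
  set N := max n M with hN
  have hNn : (n:ℝ) ≤ N := by exact_mod_cast le_max_left n M
  have hb1 : (N:ℝ)*t - 1 < (g N : ℝ) + (N:ℝ)*t' := by
    have := Int.sub_one_lt_floor ((N:ℝ)*t)
    have := Int.floor_le ((N:ℝ)*t')
    simp only [hg]
    push_cast
    linarith
  have hb2 : (g N : ℝ) + (N:ℝ)*t' < (N:ℝ)*t + 1 := by
    have := Int.floor_le ((N:ℝ)*t)
    have := Int.sub_one_lt_floor ((N:ℝ)*t')
    simp only [hg]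
    push_cast
    linarith
  have habs : (N:ℝ) * |t - t'| ≤ |(g M : ℝ)| + 2 := by
    rw [← hnM]
    have h1 : (N:ℝ)*t - (N:ℝ)*t' < (g N : ℝ) + 1 := by linarith
    have h2 : (g N : ℝ) - 1 < (N:ℝ)*t - (N:ℝ)*t' := by linarith
    have : |(N:ℝ)*t - (N:ℝ)*t'| ≤ |(g N : ℝ)| + 1 := by
      rw [abs_le]
      constructor <;> cases abs_cases (g N : ℝ) <;> linarith
    calc (N:ℝ) * |t - t'| = |(N:ℝ)*t - (N:ℝ)*t'| := by
          rw [← mul_sub, abs_mul, abs_of_nonneg (by positivity : (0:ℝ) ≤ (N:ℝ))]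
      _ ≤ |(g N : ℝ)| + 1 := this
      _ ≤ |(g N : ℝ)| + 2 := by linarith
  have : (|(g M : ℝ)| + 2) / |t - t'| < N := lt_of_lt_of_le hn hNn
  rw [div_lt_iff₀ hd] at this
  linarith

noncomputable def seqOf (t : ℝ) : ℕ → Bool := fun j => if j % 2 = 0 then false else bitOf t (j / 2)

section Construction
variable {X : Type*} [MetricSpace X]

/-- Bundled data extracted from `ChainRel` and `PropertyStar`. -/
structure GoodData (f : X → X) (z w : X) (r : ℝ) (k T : ℕ → ℕ)
    (P Tr : ℕ → Bool → ℕ → X) : Prop where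
  hk : ∀ j, 0 < k j
  hT : ∀ j, 0 < T j
  hkT : ∀ j, k j ∣ T j
  hPchain : ∀ j : ℕ, ∀ b i, dist (f (P j b i)) (P j b (i+1)) ≤ 1/((j:ℝ)+1)
  hPCR : ∀ j b i, P j b i ∈ CR f
  hPval : ∀ j b i, k j ∣ i → P j b i = (if b then w else z)
  hPmod : ∀ j b i, P j b i = P j b (i % k j)
  hPsep : ∀ j i, r < dist (P j false i) (P j true i)
  hTrchain : ∀ j : ℕ, ∀ b, IsChain' f (1/((j:ℝ)+1)) (Tr j b) (T j)
  hTrCR : ∀ j b i, Tr j b i ∈ CR f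
  hTr0 : ∀ j b, Tr j b 0 = (if b then z else w)
  hTrT : ∀ j b, Tr j b (T j) = (if b then w else z)

lemma periodize_chain {f : X → X} {δ : ℝ} {c : ℕ → X} {k : ℕ} (hk : 0 < k)
    (hc : IsChain' f δ c k) (hck : c k = c 0) (i : ℕ) :
    dist (f (c (i % k))) (c ((i+1) % k)) ≤ δ := by
  have hik : i % k < k := Nat.mod_lt _ hk
  have e : (i+1) % k = (i % k + 1) % k := by
    conv_lhs => rw [← Nat.mod_add_div i k]
    rw [Nat.add_right_comm, Nat.add_mul_mod_self_left]
  rcases lt_or_eq_of_le (Nat.succ_le_of_lt hik) with h | h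
  · rw [e, Nat.mod_eq_of_lt h]
    exact hc _ hik
  · have h' : i % k + 1 = k := by omega
    rw [e, h', Nat.mod_self, ← hck]
    have := hc (i % k) hik
    rwa [h'] at this

lemma exists_good_data {f : X → X} {z w : X}
    (hrel : ChainRel f z w) (hstar : PropertyStar f z w) :
    ∃ r > (0:ℝ), ∃ (k T : ℕ → ℕ) (P Tr : ℕ → Bool → ℕ → X), GoodData f z w r k T P Tr := by
  obtain ⟨r, hr, hs⟩ := hstar
  refine ⟨r, hr, ?_⟩
  have H : ∀ j : ℕ, ∃ (kj Tj : ℕ) (Pj Trj : Bool → ℕ → X),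
      0 < kj ∧ 0 < Tj ∧ kj ∣ Tj ∧
      (∀ b i, dist (f (Pj b i)) (Pj b (i+1)) ≤ 1/((j:ℝ)+1)) ∧
      (∀ b i, Pj b i ∈ CR f) ∧ (∀ b i, kj ∣ i → Pj b i = (if b then w else z)) ∧
      (∀ b i, Pj b i = Pj b (i % kj)) ∧ (∀ i, r < dist (Pj false i) (Pj true i)) ∧
      (∀ b, IsChain' f (1/((j:ℝ)+1)) (Trj b) Tj) ∧ (∀ b i, Trj b i ∈ CR f) ∧
      (∀ b, Trj b 0 = (if b then z else w)) ∧ (∀ b, Trj b Tj = (if b then w else z)) := by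
    intro j
    have hδ : (0:ℝ) < 1/((j:ℝ)+1) := by positivity
    obtain ⟨k₀, hk₀, c, c', hc, hc', hcCR, hc'CR, hc0, hck, hc'0, hc'k, hsep⟩ := hs _ hδ
    obtain ⟨m, hm, N, hN, hch⟩ := hrel _ hδ
    have hkN : N ≤ k₀ * N := Nat.le_mul_of_pos_left _ hk₀
    obtain ⟨czw, hczw, hczwCR, hczw0, hczwT⟩ := (hch (k₀ * N) hkN).1
    obtain ⟨cwz, hcwz, hcwzCR, hcwz0, hcwzT⟩ := (hch (k₀ * N) hkN).2
    set T₀ := m * (k₀ * N) with hT₀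
    have hT₀pos : 0 < T₀ := Nat.mul_pos hm (Nat.mul_pos hk₀ hN)
    refine ⟨k₀, T₀, (fun b i => if b then c' (i % k₀) else c (i % k₀)),
      (fun b i => if b then czw (min i T₀) else cwz (min i T₀)),
      hk₀, hT₀pos, ⟨m * N, by ring⟩, ?_, ?_, ?_, ?_, ?_, ?_, ?_, ?_, ?_⟩
    · rintro (_|_) i
      · simpa using periodize_chain hk₀ hc (hck.trans hc0.symm) i
      · simpa using periodize_chain hk₀ hc' (hc'k.trans hc'0.symm) i
    · rintro (_|_) i
      · simpa using hcCR _ (le_of_lt (Nat.mod_lt _ hk₀))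
      · simpa using hc'CR _ (le_of_lt (Nat.mod_lt _ hk₀))
    · rintro (_|_) i hi
      · have h0 : i % k₀ = 0 := Nat.mod_eq_zero_of_dvd hi
        simpa [h0, hc0] using rfl
      · have h0 : i % k₀ = 0 := Nat.mod_eq_zero_of_dvd hi
        simpa [h0, hc'0] using rfl
    · rintro (_|_) i <;> simp [Nat.mod_mod_of_dvd _ (dvd_refl k₀)]
    · intro i
      simpa using hsep _ (le_of_lt (Nat.mod_lt _ hk₀))
    · rintro (_|_) <;> intro i hi <;>
        simp only [Bool.false_eq_true, if_false, if_true] <;>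
        rw [Nat.min_eq_left (le_of_lt hi), Nat.min_eq_left hi]
      · exact hcwz i hi
      · exact hczw i hi
    · rintro (_|_) i
      · simpa using hcwzCR _ (min_le_right _ _)
      · simpa using hczwCR _ (min_le_right _ _)
    · rintro (_|_)
      · simpa [Nat.min_eq_left (Nat.zero_le _)] using hcwz0
      · simpa [Nat.min_eq_left (Nat.zero_le _)] using hczw0
    · rintro (_|_)
      · simpa using hcwzT
      · simpa using hczwT
  choose k T P Tr h1 h2 h3 h4 h5 h6 h7 h8 h9 h10 h11 h12 using H
  exact ⟨k, T, P, Tr, ⟨h1, h2, h3, h4, h5, h6, h7, h8, h9, h10, h11, h12⟩⟩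

end Construction

section Orbit
variable (k T : ℕ → ℕ)

/-- Start index of block `j`. -/
def sSeq : ℕ → ℕ
  | 0 => 0
  | j+1 => sSeq j + T (j+1) + k (j+1) * ((j+1) * (sSeq j + T (j+1)) + 1)

/-- Length of the cycle part of block `j`. -/
def LSeq (j : ℕ) : ℕ := k (j+1) * ((j+1) * (sSeq k T j + T (j+1)) + 1)

lemma sSeq_succ (j : ℕ) : sSeq k T (j+1) = sSeq k T j + T (j+1) + LSeq k T j := rfl

/-- The block index of position `i`. -/
noncomputable def blkOf (i : ℕ) : ℕ := Nat.findGreatest (fun j => sSeq k T j ≤ i) i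

variable {k T}

lemma sSeq_lt_succ (hT : ∀ j, 0 < T j) (j : ℕ) : sSeq k T j < sSeq k T (j+1) := by
  rw [sSeq_succ]
  have := hT (j+1)
  omega

lemma sSeq_mono (hT : ∀ j, 0 < T j) : StrictMono (sSeq k T) :=
  strictMono_nat_of_lt_succ (sSeq_lt_succ hT)

lemma self_le_sSeq (hT : ∀ j, 0 < T j) (j : ℕ) : j ≤ sSeq k T j := by
  induction j with
  | zero => simp [sSeq]
  | succ j ih => have := sSeq_lt_succ (k := k) hT j; omega

lemma le_blkOf (hT : ∀ j, 0 < T j) {J i : ℕ} (h : sSeq k T J ≤ i) : J ≤ blkOf k T i :=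
  Nat.le_findGreatest (le_trans (self_le_sSeq hT J) h) h

lemma sSeq_blkOf_le (i : ℕ) : sSeq k T (blkOf k T i) ≤ i :=
  Nat.findGreatest_spec (P := fun j => sSeq k T j ≤ i) (Nat.zero_le i) (by simp [sSeq])

lemma lt_sSeq_blkOf_succ (hT : ∀ j, 0 < T j) (i : ℕ) : i < sSeq k T (blkOf k T i + 1) := by
  by_contra hc
  push_neg at hc
  have := le_blkOf hT hc
  omega

lemma blkOf_eq (hT : ∀ j, 0 < T j) {j i : ℕ} (h1 : sSeq k T j ≤ i) (h2 : i < sSeq k T (j+1)) :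
    blkOf k T i = j := by
  have hle : j ≤ blkOf k T i := le_blkOf hT h1
  by_contra hne
  have hj : j + 1 ≤ blkOf k T i := by omega
  have := (sSeq_mono (k := k) hT).monotone hj
  have := sSeq_blkOf_le (k := k) (T := T) i
  omega

end Orbit

section XSeq
variable {X : Type*} [MetricSpace X] (k T : ℕ → ℕ) (P Tr : ℕ → Bool → ℕ → X)

/-- The pseudo-orbit associated to a symbol sequence `a`. -/
noncomputable def xSeq (a : ℕ → Bool) (i : ℕ) : X :=
  let j := blkOf k T i
  let t := i - sSeq k T j
  if a j = a (j+1) then P (j+1) (a (j+1)) t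
  else if t < T (j+1) then Tr (j+1) (a (j+1)) t
  else P (j+1) (a (j+1)) (t - T (j+1))

variable {k T P Tr} {f : X → X} {z w : X} {r : ℝ}

lemma xSeq_CR (D : GoodData f z w r k T P Tr) (a : ℕ → Bool) (i : ℕ) :
    xSeq k T P Tr a i ∈ CR f := by
  unfold xSeq
  dsimp only
  split_ifs
  · exact D.hPCR _ _ _
  · exact D.hTrCR _ _ _
  · exact D.hPCR _ _ _

lemma xSeq_eval (hT : ∀ j, 0 < T j) (a : ℕ → Bool) {j i : ℕ}
    (h1 : sSeq k T j ≤ i) (h2 : i < sSeq k T (j+1)) :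
    xSeq k T P Tr a i =
      (if a j = a (j+1) then P (j+1) (a (j+1)) (i - sSeq k T j)
       else if i - sSeq k T j < T (j+1) then Tr (j+1) (a (j+1)) (i - sSeq k T j)
       else P (j+1) (a (j+1)) (i - sSeq k T j - T (j+1))) := by
  unfold xSeq
  rw [blkOf_eq hT h1 h2]

lemma xSeq_chain (D : GoodData f z w r k T P Tr) (a : ℕ → Bool) (i : ℕ) :
    dist (f (xSeq k T P Tr a i)) (xSeq k T P Tr a (i+1)) ≤ 1/((blkOf k T i : ℝ)+1+1) := by
  have hT := D.hT
  obtain ⟨j, hj⟩ : ∃ j, blkOf k T i = j := ⟨_, rfl⟩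
  have hs1 : sSeq k T j ≤ i := hj ▸ sSeq_blkOf_le i
  have hs2 : i < sSeq k T (j+1) := hj ▸ lt_sSeq_blkOf_succ hT i
  rw [hj, show ((j:ℝ)+1+1) = ((j+1:ℕ):ℝ)+1 by push_cast; ring]
  rw [xSeq_eval hT a hs1 hs2]
  rcases Nat.lt_or_ge (i+1) (sSeq k T (j+1)) with hA | hB
  · rw [xSeq_eval hT a (by omega) hA]
    rw [show i + 1 - sSeq k T j = (i - sSeq k T j) + 1 by omega]
    split_ifs with h1 h2 h3 h3
    · exact D.hPchain (j+1) _ _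
    · exact D.hTrchain (j+1) _ _ h2
    · -- t < T but t+1 = T
      rw [show i - sSeq k T j + 1 - T (j+1) = 0 by omega,
        D.hPval (j+1) _ 0 (dvd_zero _), ← D.hTrT (j+1) (a (j+1))]
      have h := D.hTrchain (j+1) (a (j+1)) _ h2
      rwa [show i - sSeq k T j + 1 = T (j+1) by omega] at h
    · omega
    · rw [show i - sSeq k T j + 1 - T (j+1) = (i - sSeq k T j - T (j+1)) + 1 by omega]
      exact D.hPchain (j+1) _ _
  · have hE : i + 1 = sSeq k T (j+1) := by omega
    have hlt : i + 1 < sSeq k T (j+1+1) := by have := sSeq_lt_succ (k := k) hT (j+1); omega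
    rw [xSeq_eval hT a (by omega) hlt]
    rw [show i + 1 - sSeq k T (j+1) = 0 by omega]
    have hx1 : (if a (j+1) = a (j+1+1) then P (j+1+1) (a (j+1+1)) 0
        else if (0:ℕ) < T (j+1+1) then Tr (j+1+1) (a (j+1+1)) 0
        else P (j+1+1) (a (j+1+1)) (0 - T (j+1+1)))
        = (if a (j+1) then w else z) := by
      rcases eq_or_ne (a (j+1)) (a (j+1+1)) with h1 | h1
      · rw [if_pos h1, D.hPval _ _ 0 (dvd_zero _), ← h1]
      · rw [if_neg h1, if_pos (hT (j+1+1)), D.hTr0]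
        cases haj : a (j+1) <;> cases hak : a (j+1+1) <;> simp_all
    rw [hx1]
    have hsucc : sSeq k T (j+1) = sSeq k T j + T (j+1) + LSeq k T j := sSeq_succ k T j
    have hLpos : 0 < LSeq k T j := Nat.mul_pos (D.hk (j+1)) (by omega)
    have hkL : k (j+1) ∣ LSeq k T j := ⟨_, rfl⟩
    obtain ⟨qT, hqT⟩ := D.hkT (j+1)
    obtain ⟨qL, hqL⟩ := hkL
    rcases eq_or_ne (a j) (a (j+1)) with h1 | h1
    · rw [if_pos h1]
      have hdvd : k (j+1) ∣ (i - sSeq k T j) + 1 := by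
        rw [show i - sSeq k T j + 1 = T (j+1) + LSeq k T j by omega, hqT, hqL, ← Nat.mul_add]
        exact Dvd.intro _ rfl
      rw [show (if a (j+1) then w else z) = P (j+1) (a (j+1)) ((i - sSeq k T j) + 1) from
        (D.hPval _ _ _ hdvd).symm]
      exact D.hPchain (j+1) _ _
    · rw [if_neg h1, if_neg (show ¬ i - sSeq k T j < T (j+1) by omega)]
      have hdvd : k (j+1) ∣ (i - sSeq k T j - T (j+1)) + 1 := by
        rw [show i - sSeq k T j - T (j+1) + 1 = LSeq k T j by omega, hqL]
        exact Dvd.intro _ rfl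
      rw [show (if a (j+1) then w else z) = P (j+1) (a (j+1)) ((i - sSeq k T j - T (j+1)) + 1) from
        (D.hPval _ _ _ hdvd).symm]
      exact D.hPchain (j+1) _ _

lemma xSeq_cycle (D : GoodData f z w r k T P Tr) (a : ℕ → Bool) {j i : ℕ}
    (h1 : sSeq k T j + T (j+1) ≤ i) (h2 : i < sSeq k T (j+1)) :
    xSeq k T P Tr a i = P (j+1) (a (j+1)) ((i - sSeq k T j) % k (j+1)) := by
  have hT := D.hT
  rw [xSeq_eval hT a (by omega) h2]
  split_ifs with hA hB
  · exact D.hPmod _ _ _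
  · omega
  · rw [D.hPmod _ _ (i - sSeq k T j - T (j+1))]
    congr 1
    obtain ⟨q, hq⟩ := D.hkT (j+1)
    have e2 : i - sSeq k T j - T (j+1) + T (j+1) = i - sSeq k T j := by omega
    calc (i - sSeq k T j - T (j+1)) % k (j+1)
        = (i - sSeq k T j - T (j+1) + k (j+1) * q) % k (j+1) :=
          (Nat.add_mul_mod_self_left _ _ _).symm
      _ = (i - sSeq k T j) % k (j+1) := by rw [← hq, e2]

lemma blkOf_tendsto (hT : ∀ j, 0 < T j) : Tendsto (blkOf k T) atTop atTop := by
  apply Filter.tendsto_atTop.2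
  intro J
  filter_upwards [eventually_ge_atTop (sSeq k T J)] with i hi
  exact le_blkOf hT hi

lemma xSeq_tendsto (D : GoodData f z w r k T P Tr) (a : ℕ → Bool) :
    Tendsto (fun i => dist (f (xSeq k T P Tr a i)) (xSeq k T P Tr a (i+1))) atTop (nhds 0) := by
  apply squeeze_zero (fun i => dist_nonneg) (fun i => xSeq_chain D a i)
  have h1 : Tendsto (fun j : ℕ => 1/((j:ℝ)+1+1)) atTop (nhds 0) := by
    have h := (tendsto_one_div_add_atTop_nhds_zero_nat (𝕜 := ℝ)).comp (tendsto_add_atTop_nat 1)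
    convert h using 1
    funext j
    simp only [Function.comp]
    push_cast
    ring
  exact h1.comp (blkOf_tendsto D.hT)

end XSeq

section Counting
variable {X : Type*} [MetricSpace X]

lemma main_estimate {k T : ℕ → ℕ} (f : X → X) (pa pb : X) (x y : ℕ → X)
    (Q : ℕ → Prop) [DecidablePred Q] (εa : ℝ) (j : ℕ)
    (hQ : ∀ i, sSeq k T j + T (j+1) ≤ i → i < sSeq k T (j+1) →
      dist (f^[i] pa) (x i) < εa → dist (f^[i] pb) (y i) < εa → Q i) :
    ((LSeq k T j : ℝ)
      - ((Finset.range (sSeq k T (j+1))).filter (fun i => εa ≤ dist (f^[i] pa) (x i))).card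
      - ((Finset.range (sSeq k T (j+1))).filter (fun i => εa ≤ dist (f^[i] pb) (y i))).card)
      ≤ (((Finset.range (sSeq k T (j+1))).filter Q).card : ℝ) := by
  set n := sSeq k T (j+1) with hn
  set G := Finset.Ico (sSeq k T j + T (j+1)) n with hG
  set Ba := (Finset.range n).filter (fun i => εa ≤ dist (f^[i] pa) (x i)) with hBa
  set Bb := (Finset.range n).filter (fun i => εa ≤ dist (f^[i] pb) (y i)) with hBb
  have hsub : (G \ Ba) \ Bb ⊆ (Finset.range n).filter Q := by
    intro i hi
    rw [Finset.mem_sdiff] at hi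
    obtain ⟨hi', hmBb⟩ := hi
    rw [Finset.mem_sdiff] at hi'
    obtain ⟨hiG, hmBa⟩ := hi'
    rw [hG, Finset.mem_Ico] at hiG
    have hin : i ∈ Finset.range n := Finset.mem_range.2 hiG.2
    have ha' : dist (f^[i] pa) (x i) < εa := by
      by_contra hcon
      push_neg at hcon
      exact hmBa (Finset.mem_filter.2 ⟨hin, hcon⟩)
    have hb' : dist (f^[i] pb) (y i) < εa := by
      by_contra hcon
      push_neg at hcon
      exact hmBb (Finset.mem_filter.2 ⟨hin, hcon⟩)
    exact Finset.mem_filter.2 ⟨hin, hQ i hiG.1 hiG.2 ha' hb'⟩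
  have h1 : G.card - Ba.card ≤ (G \ Ba).card := Finset.le_card_sdiff Ba G
  have h2 : (G \ Ba).card - Bb.card ≤ ((G \ Ba) \ Bb).card := Finset.le_card_sdiff Bb (G \ Ba)
  have h3 := Finset.card_le_card hsub
  have hGc : G.card = LSeq k T j := by
    rw [hG, Nat.card_Ico]
    have := sSeq_succ k T j
    omega
  have hfin : LSeq k T j ≤ ((Finset.range n).filter Q).card + Ba.card + Bb.card := by omega
  have := (Nat.cast_le (α := ℝ)).2 hfin
  push_cast at this
  linarith

lemma LSeq_frac {k T : ℕ → ℕ} (hk : ∀ j, 0 < k j) (hT : ∀ j, 0 < T j) (j : ℕ) :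
    1 - 1/((j:ℝ)+2) ≤ (LSeq k T j : ℝ) / (sSeq k T (j+1) : ℝ) := by
  have hL : (j+1) * (sSeq k T j + T (j+1)) + 1 ≤ LSeq k T j :=
    Nat.le_mul_of_pos_left _ (hk (j+1))
  have hn : sSeq k T (j+1) = sSeq k T j + T (j+1) + LSeq k T j := sSeq_succ k T j
  have hLr : ((j:ℝ)+1) * ((sSeq k T j : ℝ) + (T (j+1) : ℝ)) + 1 ≤ (LSeq k T j : ℝ) := by
    exact_mod_cast hL
  have hnr : (sSeq k T (j+1) : ℝ) = (sSeq k T j : ℝ) + (T (j+1) : ℝ) + (LSeq k T j : ℝ) := by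
    exact_mod_cast hn
  have hA : (0:ℝ) ≤ (sSeq k T j : ℝ) + (T (j+1) : ℝ) := by positivity
  have hn0 : (0:ℝ) < (sSeq k T (j+1) : ℝ) := by nlinarith
  rw [le_div_iff₀ hn0]
  have hj2 : (0:ℝ) < (j:ℝ)+2 := by positivity
  rw [sub_mul, one_mul, div_mul_eq_mul_div, sub_le_iff_le_add, one_mul,
    ← sub_le_iff_le_add', le_div_iff₀ hj2]
  nlinarith

lemma limsup_frac_one {f : X → X} {z w : X} {r : ℝ} {k T : ℕ → ℕ}
    {P Tr : ℕ → Bool → ℕ → X} (D : GoodData f z w r k T P Tr)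
    (a b : ℕ → Bool) (pa pb : X)
    (hpa : Tendsto (fun n : ℕ =>
      (∑ i ∈ Finset.range n, dist (f^[i] pa) (xSeq k T P Tr a i)) / n) atTop (nhds 0))
    (hpb : Tendsto (fun n : ℕ =>
      (∑ i ∈ Finset.range n, dist (f^[i] pb) (xSeq k T P Tr b i)) / n) atTop (nhds 0))
    (Q : ℕ → Prop) [DecidablePred Q] (εa : ℝ) (hεa : 0 < εa)
    (J : ℕ → Prop) (hJ : ∀ M, ∃ j, J j ∧ M ≤ j)
    (hQ : ∀ j, J j → ∀ i, sSeq k T j + T (j+1) ≤ i → i < sSeq k T (j+1) →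
      dist (f^[i] pa) (xSeq k T P Tr a i) < εa →
      dist (f^[i] pb) (xSeq k T P Tr b i) < εa → Q i) :
    Filter.limsup (fun n : ℕ => (((Finset.range n).filter Q).card : ℝ) / n)
      Filter.atTop = 1 := by
  apply limsup_eq_one_of _ (fun n => by positivity)
  · intro n
    rcases Nat.eq_zero_or_pos n with rfl | hn
    · simp
    · rw [div_le_one (by exact_mod_cast hn)]
      exact_mod_cast (Finset.card_filter_le _ _).trans (Finset.card_range n).le
  · intro η hη n₀
    have hma := markov_lemma _ (fun i => dist_nonneg) εa hεa hpa
    have hmb := markov_lemma _ (fun i => dist_nonneg) εa hεa hpb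
    have hma' := hma.eventually (gt_mem_nhds (by linarith : (0:ℝ) < η/3))
    have hmb' := hmb.eventually (gt_mem_nhds (by linarith : (0:ℝ) < η/3))
    rw [eventually_atTop] at hma' hmb'
    obtain ⟨N₁, hN₁⟩ := hma'
    obtain ⟨N₂, hN₂⟩ := hmb'
    obtain ⟨J₀, hJ₀⟩ := exists_nat_gt (3/η)
    obtain ⟨j, hjJ, hjge⟩ := hJ (max (max n₀ J₀) (max N₁ N₂))
    set n := sSeq k T (j+1) with hn
    have hnj : j + 1 ≤ n := self_le_sSeq D.hT (j+1)
    have hn1 : N₁ ≤ n := by omega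
    have hn2 : N₂ ≤ n := by omega
    have hnn0 : n₀ ≤ n := by omega
    have hnpos : 0 < n := by omega
    have hnr : (0:ℝ) < n := by exact_mod_cast hnpos
    refine ⟨n, hnn0, ?_⟩
    have hest := main_estimate f pa pb (xSeq k T P Tr a) (xSeq k T P Tr b) Q εa j
      (hQ j hjJ)
    have hBa := hN₁ n hn1
    have hBb := hN₂ n hn2
    have hL := LSeq_frac (k := k) (T := T) D.hk D.hT j
    have hfrac : 1/((j:ℝ)+2) < η/3 := by
      have h3η : (0:ℝ) < 3/η := by positivity
      have hJ₀j : (3/η : ℝ) < (j:ℝ) := by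
        have hJj : J₀ ≤ j := le_trans (le_trans (le_max_right n₀ J₀) (le_max_left _ _)) hjge
        have : (J₀:ℝ) ≤ (j:ℝ) := by exact_mod_cast hJj
        linarith
      rw [div_lt_div_iff₀ (by positivity) (by norm_num : (0:ℝ) < 3)]
      rw [div_lt_iff₀ hη] at hJ₀j
      nlinarith
    -- combine
    have hdiv : ((LSeq k T j : ℝ)
        - ((Finset.range n).filter (fun i => εa ≤ dist (f^[i] pa) (xSeq k T P Tr a i))).card
        - ((Finset.range n).filter (fun i => εa ≤ dist (f^[i] pb) (xSeq k T P Tr b i))).card) / n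
        ≤ (((Finset.range n).filter Q).card : ℝ) / n := by gcongr
    rw [sub_div, sub_div] at hdiv
    have hb1 : (((Finset.range n).filter
        (fun i => εa ≤ dist (f^[i] pa) (xSeq k T P Tr a i))).card : ℝ) / n < η/3 := hBa
    have hb2 : (((Finset.range n).filter
        (fun i => εa ≤ dist (f^[i] pb) (xSeq k T P Tr b i))).card : ℝ) / n < η/3 := hBb
    have hL' : 1 - η/3 ≤ (LSeq k T j : ℝ) / n := by
      have : 1 - 1/((j:ℝ)+2) ≥ 1 - η/3 := by linarith
      linarith [hL]
    linarith

end Counting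

/-- sufficient condition for DC1 (Lemma 4.1). -/
theorem dc1_sufficient_condition {X : Type*} [MetricSpace X] [CompactSpace X]
    (f : X → X) (hf : Continuous f)
    (h1 : ∃ z w : X, z ∈ CR f ∧ w ∈ CR f ∧ ChainRel f z w ∧ PropertyStar f z w)
    (h2 : ∀ x : ℕ → X, (∀ i, x i ∈ CR f) →
      Tendsto (fun i => dist (f (x i)) (x (i + 1))) atTop (nhds 0) →
      ∃ p : X, Tendsto (fun n : ℕ =>
        (∑ i ∈ Finset.range n, dist (f^[i] p) (x i)) / n) atTop (nhds 0)) :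
    ExhibitsDC1 f := by
  obtain ⟨z, w, hz, hw, hrel, hstar⟩ := h1
  obtain ⟨r, hr, k, T, P, Tr, D⟩ := exists_good_data hrel hstar
  have hx : ∀ a : ℕ → Bool, ∃ p : X, Tendsto (fun n : ℕ =>
      (∑ i ∈ Finset.range n, dist (f^[i] p) (xSeq k T P Tr a i)) / n) atTop (nhds 0) :=
    fun a => h2 _ (xSeq_CR D a) (xSeq_tendsto D a)
  choose p hp using hx
  have hr3 : (0:ℝ) < r/3 := by linarith
  have hseq_even : ∀ t : ℝ, ∀ j, j % 2 = 0 → seqOf t j = false := by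
    intro t j hj
    simp [seqOf, hj]
  have hseq_odd : ∀ t : ℝ, ∀ l : ℕ, seqOf t (2*l+1) = bitOf t l := by
    intro t l
    have h1 : ¬ ((2*l+1) % 2 = 0) := by omega
    simp only [seqOf, if_neg h1]
    congr 1
    omega
  have key : ∀ t ∈ Ioo (0:ℝ) 1, ∀ t' ∈ Ioo (0:ℝ) 1, t ≠ t' →
      DC1Pair f (p (seqOf t)) (p (seqOf t')) := by
    intro t ht t' ht' htt
    constructor
    · intro δ hδ
      apply limsup_frac_one D (seqOf t) (seqOf t') (p (seqOf t)) (p (seqOf t'))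
        (hp _) (hp _) _ (δ/2) (by linarith) (fun j => j % 2 = 1)
        (fun M => ⟨2*M+1, by omega, by omega⟩)
      intro j hj i hi1 hi2 hda hdb
      have hje : (j+1) % 2 = 0 := by omega
      have hxa := xSeq_cycle D (seqOf t) hi1 hi2
      have hxb := xSeq_cycle D (seqOf t') hi1 hi2
      have heq : xSeq k T P Tr (seqOf t) i = xSeq k T P Tr (seqOf t') i := by
        rw [hxa, hxb, hseq_even t _ hje, hseq_even t' _ hje]
      have h5 : dist (xSeq k T P Tr (seqOf t) i) (f^[i] (p (seqOf t'))) < δ/2 := by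
        rw [heq, dist_comm]
        exact hdb
      calc dist (f^[i] (p (seqOf t))) (f^[i] (p (seqOf t')))
          ≤ dist (f^[i] (p (seqOf t))) (xSeq k T P Tr (seqOf t) i)
            + dist (xSeq k T P Tr (seqOf t) i) (f^[i] (p (seqOf t'))) := dist_triangle _ _ _
        _ < δ/2 + δ/2 := add_lt_add hda h5
        _ = δ := by ring
    · refine ⟨r/3, hr3, ?_⟩
      apply limsup_frac_one D (seqOf t) (seqOf t') (p (seqOf t)) (p (seqOf t'))
        (hp _) (hp _) _ (r/3) hr3 (fun j => seqOf t (j+1) ≠ seqOf t' (j+1)) ?_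
      · intro j hj i hi1 hi2 hda hdb
        have hxa := xSeq_cycle D (seqOf t) hi1 hi2
        have hxb := xSeq_cycle D (seqOf t') hi1 hi2
        have hsep : r < dist (xSeq k T P Tr (seqOf t) i) (xSeq k T P Tr (seqOf t') i) := by
          rw [hxa, hxb]
          rcases Bool.eq_false_or_eq_true (seqOf t (j+1)) with hb1 | hb1 <;>
            rcases Bool.eq_false_or_eq_true (seqOf t' (j+1)) with hb2 | hb2
          · exact absurd (hb1.trans hb2.symm) hj
          · rw [hb1, hb2, dist_comm]
            exact D.hPsep _ _
          · rw [hb1, hb2]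
            exact D.hPsep _ _
          · exact absurd (hb1.trans hb2.symm) hj
        have h4 : dist (xSeq k T P Tr (seqOf t) i) (xSeq k T P Tr (seqOf t') i)
            ≤ dist (xSeq k T P Tr (seqOf t) i) (f^[i] (p (seqOf t)))
              + dist (f^[i] (p (seqOf t))) (f^[i] (p (seqOf t')))
              + dist (f^[i] (p (seqOf t'))) (xSeq k T P Tr (seqOf t') i) :=
          dist_triangle4 _ _ _ _
        rw [dist_comm (xSeq k T P Tr (seqOf t) i) (f^[i] (p (seqOf t)))] at h4
        linarith
      · intro M
        obtain ⟨l, hlM, hlne⟩ := bit_diff_infinite ht ht' htt M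
        refine ⟨2*l, ?_, by omega⟩
        show seqOf t (2*l+1) ≠ seqOf t' (2*l+1)
        rw [hseq_odd t l, hseq_odd t' l]
        exact hlne
  have hinj : InjOn (fun t : ℝ => p (seqOf t)) (Ioo 0 1) := by
    intro t ht t' ht' he
    by_contra hne
    obtain ⟨-, δ₀, hδ₀, hl⟩ := key t ht t' ht' hne
    dsimp only at he
    rw [he] at hl
    have hzero : (fun n : ℕ => (((Finset.range n).filter fun i =>
        dist (f^[i] (p (seqOf t'))) (f^[i] (p (seqOf t'))) > δ₀).card : ℝ)/n)
        = fun _ : ℕ => (0:ℝ) := by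
      funext n
      have : ((Finset.range n).filter fun i =>
          dist (f^[i] (p (seqOf t'))) (f^[i] (p (seqOf t'))) > δ₀) = ∅ := by
        apply Finset.filter_false_of_mem
        intro i _
        rw [dist_self]
        exact not_lt.2 hδ₀.le
      rw [this]
      simp
    rw [hzero, limsup_const] at hl
    norm_num at hl
  refine ⟨(fun t : ℝ => p (seqOf t)) '' Ioo 0 1, ?_, ?_⟩
  · intro hc
    have hcnt := Set.countable_of_injective_of_countable_image hinj hc
    have hmk := Cardinal.mk_Ioo_real (by norm_num : (0:ℝ) < 1)
    rw [← Cardinal.le_aleph0_iff_set_countable, hmk] at hcnt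
    exact absurd hcnt (not_le.2 Cardinal.aleph0_lt_continuum)
  · rintro x ⟨t, ht, rfl⟩ y' ⟨t', ht', rfl⟩ hxy
    refine key t ht t' ht' ?_
    intro hE
    exact hxy (by rw [hE])
end
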